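/- arXiv:2507.01268 — 2 statements merged into one kernel-verified Lean document; each statement's English description precedes it below -/
import Mathlib

section
/- Let H = T_H ⋊ H₀ be a split, locally compact subgroup of Isom(𝔼ⁿ) with compact generating set S. Then there exist constants A > 0, B ≥ 0, C > 0 and D ≥ 0 (depending only on H and S) such that A·ℓ_S(t^λ w) − B ≤ ‖λ‖ ≤ C·ℓ_S(t^λ w) + D for all t^λ ∈ T_H and all w ∈ H₀, where ‖λ‖ denotes the Euclidean norm of λ ∈ ℝⁿ. -/
open Pointwise Topology Filter
set_option maxHeartbeats 2000000


noncomputable section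

/-- Euclidean `n`-space. -/
abbrev En (n : ℕ) : Type := EuclideanSpace ℝ (Fin n)

/-- The orthogonal group of Euclidean `n`-space, realized as linear isometries. -/
abbrev OrthGrp (n : ℕ) : Type := En n ≃ₗᵢ[ℝ] En n

/-- The action of the orthogonal group on the (multiplicatively written) translation group. -/
def rotAction (n : ℕ) : OrthGrp n →* MulAut (Multiplicative (En n)) where
  toFun A := AddEquiv.toMultiplicative A.toLinearEquiv.toAddEquiv
  map_one' := by ext x; rfl
  map_mul' A B := by ext x; rfl

/-- The isometry group `Isom(𝔼ⁿ) = T ⋊ O(n)`. -/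
abbrev IsomE (n : ℕ) : Type :=
  SemidirectProduct (Multiplicative (En n)) (OrthGrp n) (rotAction n)

instance (n : ℕ) : TopologicalSpace (OrthGrp n) :=
  TopologicalSpace.induced (fun A => (A : En n → En n)) inferInstance

instance (n : ℕ) : TopologicalSpace (IsomE n) :=
  TopologicalSpace.induced (fun g => (g.left, g.right)) inferInstance

/-- The translation subgroup `T` of `Isom(𝔼ⁿ)`. -/
def transSubgroup (n : ℕ) : Subgroup (IsomE n) := SemidirectProduct.inl.range

/-- The orthogonal subgroup `O(n)` of `Isom(𝔼ⁿ)`. -/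
def sphSubgroup (n : ℕ) : Subgroup (IsomE n) := SemidirectProduct.inr.range

/-- A subgroup `H` of `Isom(𝔼ⁿ)` *splits* if `H = T_H ⋊ H₀`:
the translation part and the spherical part of every element of `H` lie in `H`. -/
def Splits {n : ℕ} (H : Subgroup (IsomE n)) : Prop :=
  ∀ h ∈ H, SemidirectProduct.inl h.left ∈ H ∧ SemidirectProduct.inr h.right ∈ H

/-- The translation vector of an isometry. -/
def tPart {n : ℕ} (g : IsomE n) : En n := Multiplicative.toAdd g.left

/-- The lattice `L_H = {λ : t^λ ∈ T_H}` of translation vectors of `H`. -/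
def latticeLH {n : ℕ} (H : Subgroup (IsomE n)) : Set (En n) :=
  {v | SemidirectProduct.inl (Multiplicative.ofAdd v) ∈ H}

/-- Word length with respect to a generating set `S` (symmetrized). -/
def wordLength {G : Type*} [Group G] (S : Set G) (g : G) : ℕ :=
  sInf {k | ∃ l : List G, (∀ x ∈ l, x ∈ S ∨ x⁻¹ ∈ S) ∧ l.prod = g ∧ l.length = k}

/-- The conjugator length of a pair of elements. -/
def conjLength {G : Type*} [Group G] (S : Set G) (h h' : G) : ℕ :=
  sInf {m | ∃ k : G, k * h * k⁻¹ = h' ∧ wordLength S k = m}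

/-- The conjugator length function. -/
def CLF {G : Type*} [Group G] (S : Set G) (m : ℕ) : ℕ :=
  sSup {l | ∃ h h' : G, IsConj h h' ∧ wordLength S h + wordLength S h' ≤ m ∧
    conjLength S h h' = l}

/-- `g` quasi-dominates `f` via an increasing affine function. -/
def QuasiDom (f g : ℕ → ℕ) : Prop :=
  ∃ C D : ℕ, 0 < C ∧ ∀ m, f m ≤ C * g (C * m + D) + D

namespace WL

variable {G : Type*} [Group G] (S : Set G)

theorem wl_le {g : G} {l : List G} (hl : ∀ x ∈ l, x ∈ S ∨ x⁻¹ ∈ S) (hp : l.prod = g) :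
    wordLength S g ≤ l.length :=
  Nat.sInf_le ⟨l, hl, hp, rfl⟩

theorem exists_rep {g : G} (hg : g ∈ Subgroup.closure S) :
    ∃ l : List G, (∀ x ∈ l, x ∈ S ∨ x⁻¹ ∈ S) ∧ l.prod = g := by
  let W : Subgroup G :=
    { carrier := {g | ∃ l : List G, (∀ x ∈ l, x ∈ S ∨ x⁻¹ ∈ S) ∧ l.prod = g}
      one_mem' := ⟨[], by simp, rfl⟩
      mul_mem' := by
        rintro a b ⟨l1, h1, rfl⟩ ⟨l2, h2, rfl⟩
        exact ⟨l1 ++ l2, by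
          simp only [List.mem_append]
          rintro x (hx | hx)
          exacts [h1 x hx, h2 x hx], List.prod_append⟩
      inv_mem' := by
        rintro a ⟨l, h, rfl⟩
        refine ⟨(l.map (·⁻¹)).reverse, ?_, (List.prod_inv_reverse l).symm⟩
        intro x hx
        simp only [List.mem_reverse, List.mem_map] at hx
        obtain ⟨y, hy, rfl⟩ := hx
        rcases h y hy with hyS | hyS
        · exact Or.inr (by simpa using hyS)
        · exact Or.inl hyS }
  have : Subgroup.closure S ≤ W := Subgroup.closure_le W |>.2 (fun x hx => ⟨[x], by simp [hx], by simp⟩)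
  exact this hg

theorem exists_rep_len (hSgen : Subgroup.closure S = ⊤) (g : G) :
    ∃ l : List G, (∀ x ∈ l, x ∈ S ∨ x⁻¹ ∈ S) ∧ l.prod = g ∧ l.length = wordLength S g := by
  have hg : g ∈ Subgroup.closure S := hSgen ▸ Subgroup.mem_top g
  obtain ⟨l, hl, hp⟩ := exists_rep S hg
  have hne : {k | ∃ l : List G, (∀ x ∈ l, x ∈ S ∨ x⁻¹ ∈ S) ∧ l.prod = g ∧ l.length = k}.Nonempty :=
    ⟨l.length, l, hl, hp, rfl⟩
  exact Nat.sInf_mem hne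

theorem wl_mul_le (hSgen : Subgroup.closure S = ⊤) (g h : G) :
    wordLength S (g * h) ≤ wordLength S g + wordLength S h := by
  obtain ⟨l1, h1, p1, e1⟩ := exists_rep_len S hSgen g
  obtain ⟨l2, h2, p2, e2⟩ := exists_rep_len S hSgen h
  calc wordLength S (g * h) ≤ (l1 ++ l2).length := by
        refine wl_le S ?_ (by rw [List.prod_append, p1, p2])
        simp only [List.mem_append]
        rintro x (hx | hx)
        exacts [h1 x hx, h2 x hx]
    _ = wordLength S g + wordLength S h := by simp [e1, e2]

theorem wl_prod_le (hSgen : Subgroup.closure S = ⊤) (l : List G) :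
    wordLength S l.prod ≤ (l.map (wordLength S)).sum := by
  induction l with
  | nil =>
      simp only [List.prod_nil, List.map_nil, List.sum_nil, Nat.le_zero]
      exact Nat.le_antisymm (Nat.sInf_le ⟨[], by simp, rfl, rfl⟩) (Nat.zero_le _)
  | cons a l ih =>
      simp only [List.prod_cons, List.map_cons, List.sum_cons]
      exact le_trans (wl_mul_le S hSgen a l.prod) (Nat.add_le_add_left ih _)

theorem rep_of_mem_pow {g : G} {k : ℕ} (hg : g ∈ (S ∪ S⁻¹ ∪ {1} : Set G) ^ k) :
    ∃ l : List G, (∀ x ∈ l, x ∈ S ∨ x⁻¹ ∈ S) ∧ l.prod = g ∧ l.length ≤ k := by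
  induction k generalizing g with
  | zero =>
      rw [pow_zero, Set.mem_one] at hg
      exact ⟨[], by simp, by simp [hg], by simp⟩
  | succ k ih =>
      rw [pow_succ'] at hg
      obtain ⟨a, ha, b, hb, rfl⟩ := hg
      obtain ⟨l, hl, hp, hlen⟩ := ih hb
      rcases ha with (ha | ha) | ha
      · refine ⟨a :: l, ?_, by simp [hp], by simpa using Nat.succ_le_succ hlen⟩
        intro x hx
        rcases List.mem_cons.mp hx with rfl | hx
        exacts [Or.inl ha, hl x hx]
      · refine ⟨a :: l, ?_, by simp [hp], by simpa using Nat.succ_le_succ hlen⟩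
        intro x hx
        rcases List.mem_cons.mp hx with rfl | hx
        exacts [Or.inr (by simpa using ha), hl x hx]
      · rw [Set.mem_singleton_iff] at ha
        exact ⟨l, hl, by simp [hp, ha], le_trans hlen (Nat.le_succ _)⟩

theorem wl_of_mem_pow {g : G} {k : ℕ} (hg : g ∈ (S ∪ S⁻¹ ∪ {1} : Set G) ^ k) :
    wordLength S g ≤ k := by
  obtain ⟨l, hl, hp, hlen⟩ := rep_of_mem_pow S hg
  exact le_trans (wl_le S hl hp) hlen

theorem mem_pow_of_rep {g : G} {l : List G} (hl : ∀ x ∈ l, x ∈ S ∨ x⁻¹ ∈ S) (hp : l.prod = g) :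
    g ∈ (S ∪ S⁻¹ ∪ {1} : Set G) ^ l.length := by
  induction l generalizing g with
  | nil => simp [← hp]
  | cons a t ih =>
      subst hp
      rw [List.length_cons, pow_succ']
      refine Set.mul_mem_mul ?_ (ih (fun x hx => hl x (List.mem_cons_of_mem a hx)) rfl)
      rcases hl a (List.mem_cons_self) with ha | ha
      · exact Or.inl (Or.inl ha)
      · exact Or.inl (Or.inr (by simpa using ha))

end WL

namespace OrthTop

variable {n : ℕ}

theorem continuous_coe : Continuous (fun A : OrthGrp n => (A : En n → En n)) :=
  continuous_induced_dom

theorem isEmbedding_coe : IsEmbedding (fun A : OrthGrp n => (A : En n → En n)) :=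
  ⟨IsInducing.induced _, fun A B h => LinearIsometryEquiv.coe_injective h⟩

theorem continuous_apply_pt (y : En n) : Continuous (fun A : OrthGrp n => A y) :=
  (continuous_apply y).comp continuous_coe

theorem continuous_eval : Continuous (fun p : OrthGrp n × En n => p.1 p.2) := by
  rw [continuous_iff_continuousAt]
  rintro ⟨A₀, y₀⟩
  have h2 : Tendsto (fun p : OrthGrp n × En n => dist p.2 y₀ + dist (p.1 y₀) (A₀ y₀))
      (𝓝 (A₀, y₀)) (𝓝 (dist y₀ y₀ + dist (A₀ y₀) (A₀ y₀))) := by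
    exact Tendsto.add ((continuous_snd.dist continuous_const).tendsto _)
      ((((continuous_apply_pt y₀).comp continuous_fst).dist continuous_const).tendsto _)
  simp only [dist_self, add_zero] at h2
  have key : Tendsto (fun p : OrthGrp n × En n => dist (p.1 p.2) (A₀ y₀)) (𝓝 (A₀, y₀)) (𝓝 0) := by
    refine squeeze_zero (fun p => dist_nonneg) (fun p => ?_) h2
    calc dist (p.1 p.2) (A₀ y₀) ≤ dist (p.1 p.2) (p.1 y₀) + dist (p.1 y₀) (A₀ y₀) :=
          dist_triangle _ _ _
      _ = dist p.2 y₀ + dist (p.1 y₀) (A₀ y₀) := by rw [LinearIsometryEquiv.dist_map]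
  exact tendsto_iff_dist_tendsto_zero.2 key

instance : ContinuousMul (OrthGrp n) := by
  constructor
  apply continuous_induced_rng.2
  apply continuous_pi
  intro x
  show Continuous fun p : OrthGrp n × OrthGrp n => (p.1 * p.2) x
  have h : ∀ p : OrthGrp n × OrthGrp n, (p.1 * p.2) x = p.1 (p.2 x) := fun p => rfl
  simp only [h]
  exact continuous_eval.comp ((continuous_fst).prodMk ((continuous_apply_pt x).comp continuous_snd))

instance : ContinuousInv (OrthGrp n) := by
  constructor
  apply continuous_induced_rng.2
  apply continuous_pi
  intro x
  show Continuous fun A : OrthGrp n => A⁻¹ x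
  rw [continuous_iff_continuousAt]
  intro A₀
  have heq : ∀ A : OrthGrp n, dist (A⁻¹ x) (A₀⁻¹ x) = dist (A (A₀⁻¹ x)) x := by
    intro A
    conv_lhs => rw [← LinearIsometryEquiv.dist_map A (A⁻¹ x) (A₀⁻¹ x)]
    have h1 : A (A⁻¹ x) = x := A.apply_symm_apply x
    rw [h1, dist_comm]
  refine tendsto_iff_dist_tendsto_zero.2 ?_
  simp only [heq]
  have h2 : Tendsto (fun A : OrthGrp n => dist (A (A₀⁻¹ x)) x) (𝓝 A₀) (𝓝 (dist (A₀ (A₀⁻¹ x)) x)) :=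
    ((continuous_apply_pt (A₀⁻¹ x)).dist continuous_const).tendsto _
  simpa [A₀.apply_symm_apply] using h2

instance : IsTopologicalGroup (OrthGrp n) := ⟨⟩

instance : T2Space (OrthGrp n) := isEmbedding_coe.t2Space

instance : CompactSpace (OrthGrp n) := by
  have hZP : Set.range (fun A : OrthGrp n => (A : En n → En n)) ⊆
      Set.pi Set.univ (fun x : En n => Metric.closedBall (0 : En n) ‖x‖) := by
    rintro _ ⟨A, rfl⟩ x -
    simpa [Metric.mem_closedBall, dist_eq_norm] using le_of_eq (A.norm_map x)
  have hZ : Set.range (fun A : OrthGrp n => (A : En n → En n)) =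
      {f : En n → En n | Isometry f ∧ (∀ x y, f (x + y) = f x + f y) ∧
        (∀ (c : ℝ) (x : En n), f (c • x) = c • f x)} := by
    apply Set.Subset.antisymm
    · rintro _ ⟨A, rfl⟩
      exact ⟨A.isometry, fun x y => A.map_add x y, fun c x => A.map_smul c x⟩
    · rintro f ⟨hiso, hadd, hsmul⟩
      have hlin : IsLinearMap ℝ f := ⟨hadd, hsmul⟩
      let f' : En n →ₗ[ℝ] En n := IsLinearMap.mk' f hlin
      have hinj : Function.Injective f' := hiso.injective
      have hbij : Function.Bijective f' := ⟨hinj, LinearMap.injective_iff_surjective.1 hinj⟩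
      have h0 : f 0 = 0 := hlin.map_zero
      have hnorm : ∀ x, ‖f' x‖ = ‖x‖ := by
        intro x
        have := hiso.dist_eq x 0
        show ‖f x‖ = ‖x‖
        simpa [h0, dist_eq_norm] using this
      exact ⟨LinearIsometryEquiv.mk (LinearEquiv.ofBijective f' hbij) hnorm, rfl⟩
  have hclosed : IsClosed {f : En n → En n | Isometry f ∧ (∀ x y, f (x + y) = f x + f y) ∧
        (∀ (c : ℝ) (x : En n), f (c • x) = c • f x)} := by
    have h1 : IsClosed {f : En n → En n | Isometry f} := by
      have he : {f : En n → En n | Isometry f} =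
          ⋂ (x : En n) (y : En n), {f | dist (f x) (f y) = dist x y} := by
        ext f
        simp only [Set.mem_iInter, Set.mem_setOf_eq]
        exact ⟨fun h x y => h.dist_eq x y, fun h => Isometry.of_dist_eq h⟩
      rw [he]
      exact isClosed_iInter fun x => isClosed_iInter fun y =>
        isClosed_eq ((continuous_apply x).dist (continuous_apply y)) continuous_const
    have h2 : IsClosed {f : En n → En n | ∀ x y, f (x + y) = f x + f y} := by
      have he : {f : En n → En n | ∀ x y, f (x + y) = f x + f y} =
          ⋂ (x : En n) (y : En n), {f | f (x + y) = f x + f y} := by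
        ext f; simp [Set.mem_iInter]
      rw [he]
      exact isClosed_iInter fun x => isClosed_iInter fun y =>
        isClosed_eq (continuous_apply (x + y)) ((continuous_apply x).add (continuous_apply y))
    have h3 : IsClosed {f : En n → En n | ∀ (c : ℝ) (x : En n), f (c • x) = c • f x} := by
      have he : {f : En n → En n | ∀ (c : ℝ) (x : En n), f (c • x) = c • f x} =
          ⋂ (c : ℝ) (x : En n), {f | f (c • x) = c • f x} := by
        ext f; simp [Set.mem_iInter]
      rw [he]
      exact isClosed_iInter fun c => isClosed_iInter fun x =>
        isClosed_eq (continuous_apply (c • x)) ((continuous_apply x).const_smul c)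
    have he : {f : En n → En n | Isometry f ∧ (∀ x y, f (x + y) = f x + f y) ∧
        (∀ (c : ℝ) (x : En n), f (c • x) = c • f x)} =
        {f : En n → En n | Isometry f} ∩ ({f | ∀ x y, f (x + y) = f x + f y} ∩
          {f | ∀ (c : ℝ) (x : En n), f (c • x) = c • f x}) := rfl
    rw [he]
    exact h1.inter (h2.inter h3)
  have hcpt : IsCompact (Set.pi Set.univ (fun x : En n => Metric.closedBall (0 : En n) ‖x‖)) :=
    isCompact_univ_pi fun x => isCompact_closedBall _ _
  have hRc : IsCompact (Set.range (fun A : OrthGrp n => ((A : En n → En n)))) := by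
    rw [hZ]
    exact hcpt.of_isClosed_subset hclosed (hZ ▸ hZP)
  rw [← isCompact_univ_iff, isEmbedding_coe.isCompact_iff, Set.image_univ]
  exact hRc

end OrthTop

namespace IsomTop

variable {n : ℕ}

def prodHomeo : IsomE n ≃ₜ Multiplicative (En n) × OrthGrp n where
  toFun g := (g.left, g.right)
  invFun p := ⟨p.1, p.2⟩
  left_inv g := rfl
  right_inv p := rfl
  continuous_toFun := continuous_induced_dom
  continuous_invFun := by
    apply continuous_induced_rng.2
    exact continuous_id

theorem continuous_left : Continuous (fun g : IsomE n => g.left) := by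
  have h : Continuous (fun g : IsomE n => (g.left, g.right)) := continuous_induced_dom
  exact h.fst

theorem continuous_right : Continuous (fun g : IsomE n => g.right) := by
  have h : Continuous (fun g : IsomE n => (g.left, g.right)) := continuous_induced_dom
  exact h.snd

instance : ContinuousMul (IsomE n) := by
  constructor
  apply continuous_induced_rng.2
  have hleft : ∀ p : IsomE n × IsomE n, (p.1 * p.2).left =
      Multiplicative.ofAdd (Multiplicative.toAdd p.1.left + p.1.right (Multiplicative.toAdd p.2.left)) :=
    fun p => rfl
  have hright : ∀ p : IsomE n × IsomE n, (p.1 * p.2).right = p.1.right * p.2.right := fun p => rfl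
  show Continuous fun p : IsomE n × IsomE n => ((p.1 * p.2).left, (p.1 * p.2).right)
  simp only [hleft, hright]
  refine Continuous.prodMk ?_ ?_
  · refine continuous_ofAdd.comp ?_
    refine Continuous.add ?_ ?_
    · exact continuous_toAdd.comp (continuous_left.comp continuous_fst)
    · exact OrthTop.continuous_eval.comp
        ((continuous_right.comp continuous_fst).prodMk
          (continuous_toAdd.comp (continuous_left.comp continuous_snd)))
  · exact (continuous_right.comp continuous_fst).mul (continuous_right.comp continuous_snd)

instance : ContinuousInv (IsomE n) := by
  constructor
  apply continuous_induced_rng.2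
  have hleft : ∀ g : IsomE n, (g⁻¹).left =
      Multiplicative.ofAdd ((g.right⁻¹) (- Multiplicative.toAdd g.left)) := fun g => rfl
  have hright : ∀ g : IsomE n, (g⁻¹).right = g.right⁻¹ := fun g => rfl
  show Continuous fun g : IsomE n => ((g⁻¹).left, (g⁻¹).right)
  simp only [hleft, hright]
  refine Continuous.prodMk ?_ (continuous_right.inv)
  refine continuous_ofAdd.comp ?_
  exact OrthTop.continuous_eval.comp
    ((continuous_right.inv).prodMk ((continuous_toAdd.comp continuous_left).neg))

instance : IsTopologicalGroup (IsomE n) := ⟨⟩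

instance : T2Space (IsomE n) :=
  IsEmbedding.t2Space ⟨IsInducing.induced _, fun a b h => by
    have : (prodHomeo (n := n)) a = prodHomeo b := h
    exact prodHomeo.injective this⟩

theorem continuous_tPart : Continuous (fun g : IsomE n => tPart g) :=
  continuous_toAdd.comp continuous_left

theorem isCompact_tball (r : ℝ) : IsCompact {g : IsomE n | ‖tPart g‖ ≤ r} := by
  have h1 : IsCompact ((Multiplicative.toAdd ⁻¹' Metric.closedBall (0 : En n) r) :
      Set (Multiplicative (En n))) := by
    have : ((Multiplicative.toAdd ⁻¹' Metric.closedBall (0 : En n) r) :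
        Set (Multiplicative (En n))) = Multiplicative.ofAdd '' Metric.closedBall (0 : En n) r := by
      ext x
      simp [Set.mem_image]
    rw [this]
    exact (isCompact_closedBall _ _).image continuous_ofAdd
  have h2 : IsCompact ((Multiplicative.toAdd ⁻¹' Metric.closedBall (0 : En n) r) ×ˢ
      (Set.univ : Set (OrthGrp n))) := h1.prod isCompact_univ
  have h3 : {g : IsomE n | ‖tPart g‖ ≤ r} = (prodHomeo (n := n)).symm ''
      ((Multiplicative.toAdd ⁻¹' Metric.closedBall (0 : En n) r) ×ˢ (Set.univ : Set (OrthGrp n))) := by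
    rw [Homeomorph.image_symm]
    ext g
    simp only [Set.mem_preimage, Set.mem_prod, Set.mem_univ, and_true, Set.mem_setOf_eq]
    show ‖tPart g‖ ≤ r ↔ Multiplicative.toAdd (prodHomeo g).1 ∈ Metric.closedBall (0 : En n) r
    simp only [Metric.mem_closedBall, dist_zero_right]
    rfl
  rw [h3]
  exact h2.image (prodHomeo (n := n)).symm.continuous

end IsomTop

section ClosedSubgroup

variable {G : Type*} [Group G] [TopologicalSpace G] [IsTopologicalGroup G] [T2Space G]

theorem Subgroup.isClosed_of_locallyCompact' (H : Subgroup G) (hlc : LocallyCompactSpace H) :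
    IsClosed (H : Set G) := by
  rw [← closure_subset_iff_isClosed]
  intro x hx
  obtain ⟨K, hKc, hKn⟩ := exists_compact_mem_nhds (1 : ↥H)
  rw [nhds_subtype_eq_comap] at hKn
  obtain ⟨t, ht, htK⟩ := hKn
  obtain ⟨V, hV, hVt⟩ := exists_nhds_split_inv ht
  have hVx : (fun v => v * x) '' V ∈ 𝓝 x := by
    have h := Filter.image_mem_map (m := fun v => v * x) hV
    rwa [map_mul_right_nhds_one] at h
  have hne : ((fun v => v * x) '' V ∩ (H : Set G)).Nonempty :=
    mem_closure_iff_nhds.1 hx _ hVx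
  obtain ⟨h₀, ⟨v₁, hv₁, rfl⟩, hh₀H⟩ := hne
  have hsub : (fun v => v * x) '' V ∩ (H : Set G) ⊆
      (fun k => k * (v₁ * x)) '' (Subtype.val '' K) := by
    rintro y ⟨⟨v₂, hv₂, rfl⟩, hyH⟩
    have hdiv : (v₂ * x) * (v₁ * x)⁻¹ = v₂ / v₁ := by
      simp only [div_eq_mul_inv, mul_inv_rev, ← mul_assoc]
      group
    have hmem : (v₂ * x) * (v₁ * x)⁻¹ ∈ H := mul_mem hyH (inv_mem hh₀H)
    have htmem : (v₂ * x) * (v₁ * x)⁻¹ ∈ t := hdiv ▸ hVt v₂ hv₂ v₁ hv₁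
    have : (⟨_, hmem⟩ : ↥H) ∈ K := htK htmem
    exact ⟨(v₂ * x) * (v₁ * x)⁻¹, ⟨⟨_, hmem⟩, this, rfl⟩, by group⟩
  have hxcl : x ∈ _root_.closure ((fun v => v * x) '' V ∩ (H : Set G)) := by
    rw [mem_closure_iff_nhds]
    intro U hU
    have h1 : (U ∩ (fun v => v * x) '' V) ∈ 𝓝 x := Filter.inter_mem hU hVx
    obtain ⟨y, hy1, hy2⟩ := mem_closure_iff_nhds.1 hx _ h1
    exact ⟨y, hy1.1, hy1.2, hy2⟩
  have hcpt : IsCompact ((fun k => k * (v₁ * x)) '' (Subtype.val '' K)) :=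
    (hKc.image continuous_subtype_val).image (continuous_mul_right _)
  have hfin := ((_root_.closure_mono hsub).trans hcpt.isClosed.closure_eq.subset) hxcl
  obtain ⟨y, ⟨k, hk, rfl⟩, hyx⟩ := hfin
  rw [← hyx]
  exact mul_mem k.2 hh₀H

end ClosedSubgroup

section Baire

variable {G : Type*} [Group G] [TopologicalSpace G] [IsTopologicalGroup G] [T2Space G]
  [LocallyCompactSpace G]

theorem bounded_wordLength_on_compact (S : Set G) (hS : IsCompact S)
    (hgen : Subgroup.closure S = ⊤) {K : Set G} (hK : IsCompact K) :
    ∃ N : ℕ, ∀ g ∈ K, wordLength S g ≤ N := by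
  set T : Set G := S ∪ S⁻¹ ∪ {1} with hT
  have hTc : IsCompact T := (hS.union hS.inv).union isCompact_singleton
  have hTpow : ∀ k : ℕ, IsCompact (T ^ k) := by
    intro k
    induction k with
    | zero =>
        rw [pow_zero, ← Set.singleton_one]
        exact isCompact_singleton
    | succ k ih => rw [pow_succ]; exact ih.mul hTc
  have hcover : ⋃ k : ℕ, T ^ k = Set.univ := by
    rw [Set.eq_univ_iff_forall]
    intro g
    obtain ⟨l, hl, hp⟩ := WL.exists_rep S (hgen ▸ Subgroup.mem_top g)
    exact Set.mem_iUnion.2 ⟨l.length, WL.mem_pow_of_rep S hl hp⟩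
  obtain ⟨k₀, hk₀⟩ := nonempty_interior_of_iUnion_of_closed
    (fun k : ℕ => (hTpow k).isClosed) hcover
  obtain ⟨g₀, hg₀⟩ := hk₀
  set U : G → Set G := fun x => {y | g₀ * x⁻¹ * y ∈ interior (T ^ k₀)} with hU
  have hUopen : ∀ x, IsOpen (U x) := fun x =>
    isOpen_interior.preimage (continuous_mul_left (g₀ * x⁻¹))
  have hUmem : ∀ x, x ∈ U x := by
    intro x
    show g₀ * x⁻¹ * x ∈ interior (T ^ k₀)
    simpa using hg₀
  obtain ⟨tf, htfK, htf⟩ := hK.elim_nhds_subcover U (fun x _ => (hUopen x).mem_nhds (hUmem x))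
  refine ⟨tf.sup (wordLength S) + (k₀ + k₀), ?_⟩
  intro g hg
  obtain ⟨x, hxt, hgx⟩ := Set.mem_iUnion₂.1 (htf hg)
  have h1 : g₀ * x⁻¹ * g ∈ T ^ k₀ := interior_subset hgx
  have hrw : g = x * (g₀⁻¹ * (g₀ * x⁻¹ * g)) := by group
  have hwl1 : wordLength S (g₀⁻¹) ≤ k₀ := by
    obtain ⟨l, hl, hp, hlen⟩ := WL.rep_of_mem_pow S (interior_subset hg₀)
    have : wordLength S g₀⁻¹ ≤ ((l.map (·⁻¹)).reverse).length := by
      refine WL.wl_le S ?_ ?_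
      · intro y hy
        simp only [List.mem_reverse, List.mem_map] at hy
        obtain ⟨z, hz, rfl⟩ := hy
        rcases hl z hz with h | h
        · exact Or.inr (by simpa using h)
        · exact Or.inl h
      · rw [← hp]
        exact (List.prod_inv_reverse l).symm
    simpa using this.trans (by simpa using hlen)
  have hwl2 : wordLength S (g₀ * x⁻¹ * g) ≤ k₀ := WL.wl_of_mem_pow S h1
  calc wordLength S g = wordLength S (x * (g₀⁻¹ * (g₀ * x⁻¹ * g))) := by rw [← hrw]
    _ ≤ wordLength S x + wordLength S (g₀⁻¹ * (g₀ * x⁻¹ * g)) := WL.wl_mul_le S hgen _ _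
    _ ≤ wordLength S x + (wordLength S g₀⁻¹ + wordLength S (g₀ * x⁻¹ * g)) :=
        Nat.add_le_add_left (WL.wl_mul_le S hgen _ _) _
    _ ≤ tf.sup (wordLength S) + (k₀ + k₀) := by
        have hx : wordLength S x ≤ tf.sup (wordLength S) := Finset.le_sup hxt
        omega

end Baire

section Lattice

theorem line_lemma {n : ℕ} (L : AddSubgroup (En n)) (hL : IsClosed (L : Set (En n)))
    (h : ∀ ε > 0, ∃ v ∈ L, v ≠ 0 ∧ ‖v‖ < ε) :
    ∃ u : En n, ‖u‖ = 1 ∧ ∀ t : ℝ, t • u ∈ L := by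
  have hex : ∀ k : ℕ, ∃ v, v ∈ L ∧ v ≠ 0 ∧ ‖v‖ < 1 / (k + 1) := by
    intro k
    obtain ⟨v, h1, h2, h3⟩ := h (1 / (k + 1)) (by positivity)
    exact ⟨v, h1, h2, h3⟩
  choose v hvL hvne hvlt using hex
  have hnpos : ∀ k, (0 : ℝ) < ‖v k‖ := fun k => norm_pos_iff.2 (hvne k)
  set u : ℕ → En n := fun k => ‖v k‖⁻¹ • v k with hu
  have husph : ∀ k, u k ∈ Metric.sphere (0 : En n) 1 := by
    intro k
    simp only [Metric.mem_sphere, dist_zero_right, hu, norm_smul, norm_inv, norm_norm]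
    exact inv_mul_cancel₀ (ne_of_gt (hnpos k))
  obtain ⟨u₀, hu₀, φ, hφ, hconv⟩ := (isCompact_sphere (0 : En n) 1).tendsto_subseq husph
  have hu₀norm : ‖u₀‖ = 1 := by simpa [Metric.mem_sphere, dist_zero_right] using hu₀
  refine ⟨u₀, hu₀norm, fun t => ?_⟩
  set c : ℕ → ℤ := fun k => ⌊t / ‖v (φ k)‖⌋ with hc
  have hmem : ∀ k : ℕ, ((c k : ℝ)) • v (φ k) ∈ L := by
    intro k
    rw [Int.cast_smul_eq_zsmul]
    exact zsmul_mem (hvL (φ k)) (c k)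
  have hveq : ∀ k, v (φ k) = ‖v (φ k)‖ • u (φ k) := by
    intro k
    rw [hu, smul_smul, mul_inv_cancel₀ (ne_of_gt (hnpos (φ k))), one_smul]
  have hb1 : ∀ k : ℕ, |(c k : ℝ) * ‖v (φ k)‖ - t| ≤ 1 / (k + 1) := by
    intro k
    have hp := hnpos (φ k)
    have h1 : (c k : ℝ) ≤ t / ‖v (φ k)‖ := Int.floor_le _
    have h2 : t / ‖v (φ k)‖ < (c k : ℝ) + 1 := Int.lt_floor_add_one _
    have hcp_le : (c k : ℝ) * ‖v (φ k)‖ ≤ t := by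
      have := mul_le_mul_of_nonneg_right h1 (le_of_lt hp)
      calc (c k : ℝ) * ‖v (φ k)‖ ≤ (t / ‖v (φ k)‖) * ‖v (φ k)‖ := this
        _ = t := div_mul_cancel₀ t (ne_of_gt hp)
    have ht_lt : t < ((c k : ℝ) + 1) * ‖v (φ k)‖ := by
      have := mul_lt_mul_of_pos_right h2 hp
      calc t = (t / ‖v (φ k)‖) * ‖v (φ k)‖ := (div_mul_cancel₀ t (ne_of_gt hp)).symm
        _ < ((c k : ℝ) + 1) * ‖v (φ k)‖ := this
    have hbound : |(c k : ℝ) * ‖v (φ k)‖ - t| ≤ ‖v (φ k)‖ := by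
      rw [abs_le]
      constructor
      · nlinarith
      · nlinarith
    refine hbound.trans (le_of_lt (lt_of_lt_of_le (hvlt (φ k)) ?_))
    have hk : (k : ℝ) + 1 ≤ (φ k : ℝ) + 1 := by exact_mod_cast Nat.add_le_add_right hφ.le_apply 1
    exact one_div_le_one_div_of_le (by positivity) hk
  have hscal : Tendsto (fun k => (c k : ℝ) * ‖v (φ k)‖) atTop (𝓝 t) := by
    rw [tendsto_iff_dist_tendsto_zero]
    refine squeeze_zero (fun k => dist_nonneg) (fun k => ?_) tendsto_one_div_add_atTop_nhds_zero_nat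
    rw [Real.dist_eq]
    exact hb1 k
  have hlim : Tendsto (fun k => (c k : ℝ) • v (φ k)) atTop (𝓝 (t • u₀)) := by
    have : ∀ k, (c k : ℝ) • v (φ k) = ((c k : ℝ) * ‖v (φ k)‖) • u (φ k) := by
      intro k
      conv_lhs => rw [hveq k]
      rw [smul_smul]
    simp only [this]
    exact hscal.smul hconv
  exact hL.mem_of_tendsto hlim (Eventually.of_forall hmem)

theorem decomp {n : ℕ} (L : AddSubgroup (En n)) (hL : IsClosed (L : Set (En n))) :
    ∃ r C : ℝ, 0 < r ∧ 0 ≤ C ∧ ∀ lam ∈ L, ∃ pieces : List (En n),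
      (∀ p ∈ pieces, p ∈ L ∧ ‖p‖ ≤ r) ∧ pieces.sum = lam ∧
      (pieces.length : ℝ) ≤ C * ‖lam‖ + C := by
  classical
  -- the subspace of directions fully contained in L
  set V : Submodule ℝ (En n) :=
    { carrier := {v | ∀ t : ℝ, t • v ∈ L}
      add_mem' := by
        intro a b ha hb t
        rw [smul_add]
        exact add_mem (ha t) (hb t)
      zero_mem' := by intro t; rw [smul_zero]; exact zero_mem L
      smul_mem' := by
        intro c a ha t
        rw [smul_smul]
        exact ha (t * c) } with hV
  have hVL : (V : Set (En n)) ⊆ (L : Set (En n)) := by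
    intro a ha
    have := ha (1 : ℝ)
    simpa using this
  -- the discrete part
  set Λ : Submodule ℤ (En n) :=
    (AddSubgroup.toIntSubmodule L) ⊓ (Vᗮ.restrictScalars ℤ) with hΛ
  have hΛL : ∀ x ∈ Λ, x ∈ L := fun x hx => hx.1
  have hΛperp : ∀ x ∈ Λ, x ∈ Vᗮ := fun x hx => hx.2
  have hΛclosed : IsClosed (Λ : Set (En n)) := by
    have h1 : (Λ : Set (En n)) = (L : Set (En n)) ∩ (Vᗮ : Set (En n)) := rfl
    rw [h1]
    exact hL.inter (Submodule.closed_of_finiteDimensional Vᗮ)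
  -- discreteness of Λ
  have hdisc : ∃ ε > 0, ∀ w ∈ Λ, ‖w‖ < ε → w = 0 := by
    by_contra hcon
    push_neg at hcon
    have hsmall : ∀ ε > (0:ℝ), ∃ v ∈ Λ.toAddSubgroup, v ≠ 0 ∧ ‖v‖ < ε := by
      intro ε hε
      obtain ⟨w, hwΛ, hwn, hwne⟩ := hcon ε hε
      exact ⟨w, hwΛ, hwne, hwn⟩
    obtain ⟨u, hu1, huL⟩ := line_lemma Λ.toAddSubgroup hΛclosed hsmall
    have huV : u ∈ V := by
      intro t
      exact hΛL _ (huL t)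
    have huperp : u ∈ Vᗮ := hΛperp _ (by simpa using huL 1)
    have h0 : (inner ℝ u u : ℝ) = 0 := (Submodule.mem_orthogonal V u).1 huperp u huV
    have hu0 : u = 0 := inner_self_eq_zero.1 h0
    rw [hu0] at hu1
    simp at hu1
  obtain ⟨ε, hε, hεsep⟩ := hdisc
  -- Λ is a discrete subgroup
  have hΛdisc : DiscreteTopology ↥Λ := by
    rw [discreteTopology_iff_isOpen_singleton]
    intro a
    have : {a} = (Subtype.val : ↥Λ → En n) ⁻¹' (Metric.ball (a : En n) ε) := by
      ext b
      simp only [Set.mem_singleton_iff, Set.mem_preimage, Metric.mem_ball, dist_eq_norm]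
      constructor
      · rintro rfl; simpa using hε
      · intro hb
        have hmem : (b : En n) - (a : En n) ∈ Λ := sub_mem b.2 a.2
        have := hεsep _ hmem hb
        have : (b : En n) = a := by
          have h2 : (b : En n) - (a : En n) = 0 := this
          linear_combination (norm := abel) h2
        exact Subtype.ext this
    rw [this]
    exact isOpen_induced (Metric.isOpen_ball)
  -- pass to the span of Λ
  set E' : Submodule ℝ (En n) := Submodule.span ℝ (Λ : Set (En n)) with hE'
  set f : E' →ₗ[ℝ] En n := E'.subtype with hf
  set Λ₀ : Submodule ℤ ↥E' := Λ.comap (f.restrictScalars ℤ) with hΛ₀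
  have h_img : f '' Λ₀ = Λ := by
    rw [← LinearMap.coe_restrictScalars ℤ f, ← Submodule.map_coe (f.restrictScalars ℤ),
      Submodule.map_comap_eq_self]
    exact fun x hx => LinearMap.mem_range.mpr ⟨⟨x, Submodule.subset_span hx⟩, rfl⟩
  have hΛ₀disc : DiscreteTopology ↥Λ₀ := by
    refine DiscreteTopology.preimage_of_continuous_injective (Λ : Set (En n)) ?_
      (Submodule.injective_subtype E')
    exact LinearMap.continuous_of_finiteDimensional f
  have hΛ₀lat : IsZLattice ℝ Λ₀ := ⟨by
    rw [← (Submodule.map_injective_of_injective (Submodule.injective_subtype E')).eq_iff,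
      Submodule.map_span, Submodule.map_top, Submodule.range_subtype]
    show Submodule.span ℝ (E'.subtype '' Λ₀) = E'
    rw [h_img, hE']⟩
  have hΛ₀fin : Module.Finite ℤ ↥Λ₀ := ZLattice.module_finite ℝ Λ₀
  have hΛ₀free : Module.Free ℤ ↥Λ₀ := ZLattice.module_free ℝ Λ₀
  set ι := Module.Free.ChooseBasisIndex ℤ ↥Λ₀ with hι
  have : Fintype ι := Module.Free.ChooseBasisIndex.fintype ℤ ↥Λ₀
  set b : Module.Basis ι ℤ ↥Λ₀ := Module.Free.chooseBasis ℤ ↥Λ₀ with hb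
  set b' : Module.Basis ι ℝ ↥E' := Module.Basis.ofZLatticeBasis ℝ Λ₀ b with hb'
  -- the basis vectors, seen in ambient space
  set e : ι → En n := fun i => ((b i : ↥E') : En n) with he
  have heΛ : ∀ i, e i ∈ Λ := fun i => (b i).2
  -- coordinate bound
  set Cc : ℝ := ∑ i : ι, ‖LinearMap.toContinuousLinearMap (b'.coord i)‖ with hCc
  have hCc0 : 0 ≤ Cc := Finset.sum_nonneg fun i _ => @norm_nonneg _ _ (LinearMap.toContinuousLinearMap (b'.coord i))
  have hcoord : ∀ (x : ↥E') (i : ι),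
      |b'.repr x i| ≤ ‖LinearMap.toContinuousLinearMap (b'.coord i)‖ * ‖x‖ := by
    intro x i
    have h1 : (b'.coord i) x = b'.repr x i := Module.Basis.coord_apply b' i x
    have h2 := (LinearMap.toContinuousLinearMap (b'.coord i)).le_opNorm x
    rw [show (LinearMap.toContinuousLinearMap (b'.coord i)) x = (b'.coord i) x from rfl, h1] at h2
    simpa using h2
  -- bound on basis vector norms
  set R : ℝ := 1 + ∑ i : ι, ‖e i‖ with hR
  have hR1 : 1 ≤ R := le_add_of_nonneg_right (Finset.sum_nonneg fun i _ => norm_nonneg _)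
  have heR : ∀ i, ‖e i‖ ≤ R := by
    intro i
    have h1 : ‖e i‖ ≤ ∑ j : ι, ‖e j‖ :=
      Finset.single_le_sum (fun j _ => norm_nonneg (e j)) (Finset.mem_univ i)
    linarith
  refine ⟨R, Cc + 1, lt_of_lt_of_le one_pos hR1, by linarith, ?_⟩
  intro lam hlam
  set v : En n := ↑(V.orthogonalProjectionOnto lam) with hv
  have hvV : v ∈ V := SetLike.coe_mem _
  set w : En n := lam - v with hw
  have hwperp : w ∈ Vᗮ := Submodule.sub_starProjection_mem_orthogonal (K := V) lam
  have hvL : v ∈ L := hVL hvV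
  have hwL : w ∈ L := sub_mem hlam hvL
  have hwΛ : w ∈ Λ := by
    rw [hΛ, Submodule.mem_inf]
    exact ⟨hwL, hwperp⟩
  have hinner : (inner ℝ v w : ℝ) = 0 := (Submodule.mem_orthogonal V w).1 hwperp v hvV
  have hlameq : lam = v + w := by rw [hw]; abel
  have hsq : ‖lam‖ ^ 2 = ‖v‖ ^ 2 + ‖w‖ ^ 2 := by
    rw [hlameq, norm_add_sq_real, hinner]
    ring
  have hvle : ‖v‖ ≤ ‖lam‖ := by nlinarith [norm_nonneg v, norm_nonneg w, norm_nonneg lam]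
  have hwle : ‖w‖ ≤ ‖lam‖ := by nlinarith [norm_nonneg v, norm_nonneg w, norm_nonneg lam]
  -- pieces for the connected part
  set k : ℕ := ⌈‖v‖⌉₊ with hk
  set lv : List (En n) := List.replicate k ((k : ℝ)⁻¹ • v) with hlv
  have hlv_entries : ∀ p ∈ lv, p ∈ L ∧ ‖p‖ ≤ R := by
    intro p hp
    have hpe : p = (k : ℝ)⁻¹ • v := List.eq_of_mem_replicate hp
    have hk0 : k ≠ 0 := by
      intro h0
      rw [h0] at hlv
      simp [hlv] at hp
    have hkv : ‖v‖ ≤ (k : ℝ) := Nat.le_ceil _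
    have hkpos : (0:ℝ) < k := by
      have := Nat.pos_of_ne_zero hk0
      exact_mod_cast this
    constructor
    · rw [hpe]
      exact hVL (V.smul_mem _ hvV)
    · rw [hpe, norm_smul, norm_inv, Real.norm_natCast]
      have h1 : (k:ℝ)⁻¹ * ‖v‖ ≤ 1 := by
        rw [inv_mul_le_iff₀ hkpos, mul_one]
        exact hkv
      linarith
  have hlv_sum : lv.sum = v := by
    rw [hlv, List.sum_replicate]
    by_cases hk0 : k = 0
    · have : ‖v‖ ≤ 0 := by
        have := Nat.ceil_eq_zero.1 (hk ▸ hk0)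
        exact this
      have hv0 : v = 0 := by
        have : ‖v‖ = 0 := le_antisymm this (norm_nonneg v)
        simpa using this
      simp [hk0, hv0]
    · have hkne : ((k:ℝ)) ≠ 0 := by exact_mod_cast hk0
      rw [← Nat.cast_smul_eq_nsmul ℝ, smul_smul, mul_inv_cancel₀ hkne, one_smul]
  have hlv_len : ((lv.length : ℕ) : ℝ) ≤ ‖lam‖ + 1 := by
    have h1 : lv.length = k := List.length_replicate
    have h2 : (k : ℝ) < ‖v‖ + 1 := Nat.ceil_lt_add_one (norm_nonneg v)
    rw [h1]
    linarith
  -- pieces for the discrete part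
  have hwE' : w ∈ E' := Submodule.subset_span hwΛ
  set w' : ↥Λ₀ := ⟨⟨w, hwE'⟩, by
    show (⟨w, hwE'⟩ : ↥E') ∈ Λ₀
    rw [hΛ₀, Submodule.mem_comap]
    exact hwΛ⟩ with hw'
  set m : ι → ℤ := fun i => b.repr w' i with hm
  have hkey : ((w' : ↥E') : En n) = ∑ i : ι, (m i : ℝ) • e i := by
    have h1 : (∑ i : ι, b'.repr (w' : ↥E') i • b' i) = (w' : ↥E') := Module.Basis.sum_repr b' _
    have h2 : ∀ i, b'.repr (w' : ↥E') i = (m i : ℝ) := by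
      intro i
      rw [hm, hb']
      exact Module.Basis.ofZLatticeBasis_repr_apply ℝ Λ₀ b w' i
    rw [← h1]
    rw [Submodule.coe_sum]
    refine Finset.sum_congr rfl fun i _ => ?_
    rw [h2 i, Submodule.coe_smul]
    congr 1
    rw [he, hb']
    congr 1
    exact Module.Basis.ofZLatticeBasis_apply ℝ Λ₀ b i
  have hweq : w = ∑ i : ι, (m i : ℝ) • e i := hkey
  have hnormw' : ‖(w' : ↥E')‖ = ‖w‖ := rfl
  have habs : (∑ i : ι, ((m i).natAbs : ℝ)) ≤ Cc * ‖w‖ := by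
    have h1 : ∀ i : ι, ((m i).natAbs : ℝ) ≤ ‖LinearMap.toContinuousLinearMap (b'.coord i)‖ * ‖w‖ := by
      intro i
      have h2 := hcoord (w' : ↥E') i
      have h3 : b'.repr (w' : ↥E') i = (m i : ℝ) := by
        rw [hm, hb']
        exact Module.Basis.ofZLatticeBasis_repr_apply ℝ Λ₀ b w' i
      rw [h3, hnormw'] at h2
      calc ((m i).natAbs : ℝ) = |(m i : ℝ)| := by simp [Nat.cast_natAbs]
        _ ≤ _ := h2
    calc (∑ i : ι, ((m i).natAbs : ℝ)) ≤
        ∑ i : ι, ‖LinearMap.toContinuousLinearMap (b'.coord i)‖ * ‖w‖ :=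
          Finset.sum_le_sum fun i _ => h1 i
      _ = Cc * ‖w‖ := by rw [hCc, Finset.sum_mul]
  -- build the list for the discrete part by induction over the index set
  have hcomb : ∀ s : Finset ι, ∃ lw : List (En n), (∀ p ∈ lw, p ∈ L ∧ ‖p‖ ≤ R) ∧
      lw.sum = ∑ i ∈ s, (m i : ℝ) • e i ∧ lw.length = ∑ i ∈ s, (m i).natAbs := by
    intro s
    induction s using Finset.induction_on with
    | empty => exact ⟨[], by simp, by simp, by simp⟩
    | insert a s hnotmem ih =>
        obtain ⟨lw, hlw1, hlw2, hlw3⟩ := ih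
        set la : List (En n) := List.replicate (m a).natAbs (if 0 ≤ m a then e a else -e a) with hla
        have hla_sum : la.sum = (m a : ℝ) • e a := by
          rw [hla, List.sum_replicate]
          by_cases hma : 0 ≤ m a
          · rw [if_pos hma, ← natCast_zsmul, Int.natAbs_of_nonneg hma, ← Int.cast_smul_eq_zsmul ℝ]
          · push_neg at hma
            rw [if_neg (not_le.2 hma), ← natCast_zsmul, smul_neg,
              Int.ofNat_natAbs_of_nonpos (le_of_lt hma)]
            rw [← Int.cast_smul_eq_zsmul ℝ]
            simp
        have hla_entries : ∀ p ∈ la, p ∈ L ∧ ‖p‖ ≤ R := by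
          intro p hp
          have hpe := List.eq_of_mem_replicate hp
          by_cases hma : 0 ≤ m a
          · rw [if_pos hma] at hpe
            exact hpe ▸ ⟨hΛL _ (heΛ a), heR a⟩
          · rw [if_neg hma] at hpe
            refine hpe ▸ ⟨neg_mem (hΛL _ (heΛ a)), ?_⟩
            rw [norm_neg]
            exact heR a
        refine ⟨la ++ lw, ?_, ?_, ?_⟩
        · intro p hp
          rcases List.mem_append.1 hp with h | h
          exacts [hla_entries p h, hlw1 p h]
        · rw [List.sum_append, hla_sum, hlw2, Finset.sum_insert hnotmem]
        · rw [List.length_append, List.length_replicate, hlw3, Finset.sum_insert hnotmem]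
  obtain ⟨lw, hlw1, hlw2, hlw3⟩ := hcomb Finset.univ
  refine ⟨lv ++ lw, ?_, ?_, ?_⟩
  · intro p hp
    rcases List.mem_append.1 hp with h | h
    exacts [hlv_entries p h, hlw1 p h]
  · rw [List.sum_append, hlv_sum, hlw2, ← hweq, hlameq]
  · rw [List.length_append]
    push_cast
    have hlen : ((lw.length : ℕ) : ℝ) = ∑ i : ι, ((m i).natAbs : ℝ) := by
      rw [hlw3]
      push_cast
      rfl
    have h2 : ((lw.length : ℕ) : ℝ) ≤ Cc * ‖w‖ := hlen ▸ habs
    have h3 : Cc * ‖w‖ ≤ Cc * ‖lam‖ := mul_le_mul_of_nonneg_left hwle hCc0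
    have h4 := hlv_len
    have h5 : (0:ℝ) ≤ ‖lam‖ := norm_nonneg lam
    nlinarith

end Lattice

section Final

variable {n : ℕ}

theorem tPart_mul (g h : IsomE n) : tPart (g * h) = tPart g + g.right (tPart h) := rfl

theorem tPart_inv (g : IsomE n) : tPart g⁻¹ = -(g.right⁻¹ (tPart g)) := by
  have h : tPart g⁻¹ = g.right⁻¹ (-(tPart g)) := rfl
  rw [h, map_neg]

theorem norm_tPart_mul_le (g h : IsomE n) : ‖tPart (g * h)‖ ≤ ‖tPart g‖ + ‖tPart h‖ := by
  rw [tPart_mul]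
  refine (norm_add_le _ _).trans ?_
  rw [LinearIsometryEquiv.norm_map]

theorem norm_tPart_inv (g : IsomE n) : ‖tPart g⁻¹‖ = ‖tPart g‖ := by
  rw [tPart_inv, norm_neg, LinearIsometryEquiv.norm_map]

theorem tPart_one : tPart (1 : IsomE n) = 0 := rfl

theorem prod_trans_list (l : List (En n)) :
    (l.map (fun p => (SemidirectProduct.inl (Multiplicative.ofAdd p) : IsomE n))).prod =
      SemidirectProduct.inl (Multiplicative.ofAdd l.sum) := by
  induction l with
  | nil => simp
  | cons a t ih =>
      rw [List.map_cons, List.prod_cons, ih, List.sum_cons, ← map_mul]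
      rfl

end Final

/-- **Comparison of word length and translation norm.**  Let `H = T_H ⋊ H₀` be a split,
locally compact subgroup of `Isom(𝔼ⁿ)` with compact generating set `S`.  Then there are
constants `A > 0`, `B ≥ 0`, `C > 0`, `D ≥ 0` (depending only on `H` and `S`) with
`A·ℓ_S(t^λ w) − B ≤ ‖λ‖ ≤ C·ℓ_S(t^λ w) + D` for all `t^λ ∈ T_H` and `w ∈ H₀`. -/
theorem wordlength_vs_translation_norm (n : ℕ) (H : Subgroup (IsomE n))
    (hsplit : Splits H) (hlc : LocallyCompactSpace ↥H)
    (S : Set ↥H) (hScpt : IsCompact S) (hSgen : Subgroup.closure S = ⊤) :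
    ∃ A B C D : ℝ, 0 < A ∧ 0 ≤ B ∧ 0 < C ∧ 0 ≤ D ∧
      ∀ (lam : En n) (hlam : SemidirectProduct.inl (Multiplicative.ofAdd lam) ∈ H)
        (w : OrthGrp n) (hw : SemidirectProduct.inr w ∈ H),
        A * (wordLength S ⟨SemidirectProduct.inl (Multiplicative.ofAdd lam) *
              SemidirectProduct.inr w, mul_mem hlam hw⟩ : ℝ) - B ≤ ‖lam‖ ∧
          ‖lam‖ ≤ C * (wordLength S ⟨SemidirectProduct.inl (Multiplicative.ofAdd lam) *
              SemidirectProduct.inr w, mul_mem hlam hw⟩ : ℝ) + D := by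
  classical
  have hHclosed : IsClosed (H : Set (IsomE n)) := Subgroup.isClosed_of_locallyCompact' H hlc
  -- the lattice of translations in H, as a closed additive subgroup of Euclidean space
  set LH : AddSubgroup (En n) :=
    { carrier := latticeLH H
      zero_mem' := by
        show SemidirectProduct.inl (Multiplicative.ofAdd (0 : En n)) ∈ H
        have h0 : (SemidirectProduct.inl (Multiplicative.ofAdd (0 : En n)) : IsomE n) = 1 := by
          rw [ofAdd_zero, map_one]
        rw [h0]
        exact one_mem H
      add_mem' := by
        intro a b ha hb
        show SemidirectProduct.inl (Multiplicative.ofAdd (a + b)) ∈ H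
        rw [ofAdd_add, map_mul]
        exact mul_mem ha hb
      neg_mem' := by
        intro a ha
        show SemidirectProduct.inl (Multiplicative.ofAdd (-a)) ∈ H
        rw [ofAdd_neg, map_inv]
        exact inv_mem ha } with hLH
  have hψ : Continuous (fun v : En n =>
      (SemidirectProduct.inl (Multiplicative.ofAdd v) : IsomE n)) := by
    apply continuous_induced_rng.2
    show Continuous fun v : En n =>
      ((SemidirectProduct.inl (Multiplicative.ofAdd v) : IsomE n).left,
       (SemidirectProduct.inl (Multiplicative.ofAdd v) : IsomE n).right)
    have hv : (fun v : En n =>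
        ((SemidirectProduct.inl (Multiplicative.ofAdd v) : IsomE n).left,
         (SemidirectProduct.inl (Multiplicative.ofAdd v) : IsomE n).right)) =
        fun v : En n => (Multiplicative.ofAdd v, (1 : OrthGrp n)) := rfl
    rw [hv]
    exact continuous_ofAdd.prodMk continuous_const
  have hLHclosed : IsClosed (LH : Set (En n)) := by
    have : (LH : Set (En n)) = (fun v : En n =>
        (SemidirectProduct.inl (Multiplicative.ofAdd v) : IsomE n)) ⁻¹' (H : Set (IsomE n)) := rfl
    rw [this]
    exact hHclosed.preimage hψ
  obtain ⟨r, C₁, hr, hC₁, hdec⟩ := decomp LH hLHclosed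
  -- the compact subset of H of elements with small translation part
  set Kset : Set ↥H := {h : ↥H | ‖tPart (h : IsomE n)‖ ≤ r} with hKset
  have hKcpt : IsCompact Kset := by
    rw [IsEmbedding.subtypeVal.isCompact_iff]
    have himg : Subtype.val '' Kset = (H : Set (IsomE n)) ∩ {g : IsomE n | ‖tPart g‖ ≤ r} := by
      ext g
      constructor
      · rintro ⟨h, hh, rfl⟩
        exact ⟨h.2, hh⟩
      · rintro ⟨hgH, hgr⟩
        exact ⟨⟨g, hgH⟩, hgr, rfl⟩
    rw [himg]
    refine (IsomTop.isCompact_tball r).of_isClosed_subset (hHclosed.inter ?_)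
      Set.inter_subset_right
    have : {g : IsomE n | ‖tPart g‖ ≤ r} =
        (fun g : IsomE n => ‖tPart g‖) ⁻¹' (Set.Iic r) := rfl
    rw [this]
    exact IsClosed.preimage (continuous_norm.comp IsomTop.continuous_tPart) isClosed_Iic
  haveI : LocallyCompactSpace ↥H := hlc
  obtain ⟨N, hN⟩ := bounded_wordLength_on_compact S hScpt hSgen hKcpt
  -- bound on translation parts of generators
  obtain ⟨M, hM0, hMS⟩ : ∃ M : ℝ, 0 ≤ M ∧ ∀ s ∈ S, ‖tPart ((s : ↥H) : IsomE n)‖ ≤ M := by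
    obtain ⟨M₀, hM₀⟩ := (hScpt.image
      ((continuous_norm.comp IsomTop.continuous_tPart).comp continuous_subtype_val)).bddAbove
    exact ⟨max M₀ 0, le_max_right _ _, fun s hs =>
      le_trans (hM₀ (Set.mem_image_of_mem _ hs)) (le_max_left _ _)⟩
  -- upper bound on the translation part in terms of word length
  have hup : ∀ h : ↥H, ‖tPart (h : IsomE n)‖ ≤ M * wordLength S h := by
    intro h
    obtain ⟨l, hl, hp, hlen⟩ := WL.exists_rep_len S hSgen h
    have hind : ∀ l : List ↥H, (∀ x ∈ l, x ∈ S ∨ x⁻¹ ∈ S) →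
        ‖tPart ((l.prod : ↥H) : IsomE n)‖ ≤ M * l.length := by
      intro l
      induction l with
      | nil =>
          intro _
          have h1 : (((([] : List ↥H)).prod : ↥H) : IsomE n) = 1 := rfl
          rw [h1]
          simp [tPart_one]
      | cons a t ih =>
          intro hmem
          have h1 : (((a :: t).prod : ↥H) : IsomE n) = (a : IsomE n) * ((t.prod : ↥H) : IsomE n) := by
            rw [List.prod_cons]
            rfl
          have hentry : ‖tPart ((a : ↥H) : IsomE n)‖ ≤ M := by
            rcases hmem a (List.mem_cons_self) with hs | hs
            · exact hMS a hs
            · have h2 : ‖tPart ((a : ↥H) : IsomE n)‖ = ‖tPart ((a⁻¹ : ↥H) : IsomE n)‖ := by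
                have h3 : ((a⁻¹ : ↥H) : IsomE n) = ((a : ↥H) : IsomE n)⁻¹ := rfl
                rw [h3, norm_tPart_inv]
              rw [h2]
              exact hMS _ hs
          calc ‖tPart (((a :: t).prod : ↥H) : IsomE n)‖
              ≤ ‖tPart ((a : ↥H) : IsomE n)‖ + ‖tPart ((t.prod : ↥H) : IsomE n)‖ := by
                rw [h1]
                exact norm_tPart_mul_le _ _
            _ ≤ M + M * t.length := add_le_add hentry (ih fun x hx => hmem x (List.mem_cons_of_mem a hx))
            _ = M * (a :: t).length := by
                rw [List.length_cons]
                push_cast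
                ring
    have := hind l hl
    rw [hp, hlen] at this
    exact this
  -- now assemble the constants
  refine ⟨(N * C₁ + 1)⁻¹, N * (C₁ + 1), M + 1, 1, ?_, ?_, by positivity, by norm_num, ?_⟩
  · have h1 : (0:ℝ) ≤ (N : ℝ) * C₁ := mul_nonneg (Nat.cast_nonneg N) hC₁
    positivity
  · exact mul_nonneg (Nat.cast_nonneg N) (by linarith)
  intro lam hlam w hw
  set h : ↥H := ⟨SemidirectProduct.inl (Multiplicative.ofAdd lam) *
      SemidirectProduct.inr w, mul_mem hlam hw⟩ with hh
  have htph : tPart (h : IsomE n) = lam := by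
    have h1 : ((h : ↥H) : IsomE n).left = Multiplicative.ofAdd lam := by
      show (SemidirectProduct.inl (Multiplicative.ofAdd lam) *
        SemidirectProduct.inr w).left = Multiplicative.ofAdd lam
      rw [SemidirectProduct.mul_left, SemidirectProduct.left_inl, SemidirectProduct.left_inr,
        map_one, mul_one]
    show Multiplicative.toAdd ((h : ↥H) : IsomE n).left = lam
    rw [h1]
    rfl
  constructor
  · -- lower bound: word length is at most linear in ‖lam‖
    have hlamLH : lam ∈ LH := hlam
    obtain ⟨pieces, hpc, hpsum, hplen⟩ := hdec lam hlamLH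
    -- list of elements of H
    set ltr : List ↥H := pieces.pmap
      (fun p hp => (⟨SemidirectProduct.inl (Multiplicative.ofAdd p), hp⟩ : ↥H))
      (fun p hp => show SemidirectProduct.inl (Multiplicative.ofAdd p) ∈ H from (hpc p hp).1) with hltr
    set wel : ↥H := ⟨SemidirectProduct.inr w, hw⟩ with hwel
    have hprod : (ltr ++ [wel]).prod = h := by
      apply Subtype.ext
      have h1 : (((ltr ++ [wel]).prod : ↥H) : IsomE n) =
          ((ltr ++ [wel]).map (Subtype.val)).prod := by
        exact SubmonoidClass.coe_list_prod _
      rw [h1, List.map_append, List.prod_append]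
      have h2 : ltr.map Subtype.val =
          pieces.map (fun p => (SemidirectProduct.inl (Multiplicative.ofAdd p) : IsomE n)) := by
        rw [hltr, List.map_pmap]
        exact List.pmap_eq_map _
      rw [h2, prod_trans_list, hpsum]
      simp [hwel]
      rfl
    have hmemK : ∀ x ∈ ltr ++ [wel], x ∈ Kset := by
      intro x hx
      rcases List.mem_append.1 hx with hx | hx
      · rw [hltr] at hx
        obtain ⟨p, hp, rfl⟩ := List.mem_pmap.1 hx
        show ‖tPart ((⟨SemidirectProduct.inl (Multiplicative.ofAdd p), _⟩ : ↥H) : IsomE n)‖ ≤ r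
        have : tPart (SemidirectProduct.inl (Multiplicative.ofAdd p) : IsomE n) = p := rfl
        rw [this]
        exact (hpc p hp).2
      · rw [List.mem_singleton.1 hx]
        show ‖tPart (SemidirectProduct.inr w : IsomE n)‖ ≤ r
        have : tPart (SemidirectProduct.inr w : IsomE n) = 0 := rfl
        rw [this]
        simpa using hr.le
    have hwll : wordLength S h ≤ (pieces.length + 1) * N := by
      calc wordLength S h = wordLength S (ltr ++ [wel]).prod := by rw [hprod]
        _ ≤ (((ltr ++ [wel]).map (wordLength S)).sum) := WL.wl_prod_le S hSgen _
        _ ≤ ((ltr ++ [wel]).map (wordLength S)).length • N := by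
            refine List.sum_le_card_nsmul _ _ ?_
            intro x hx
            obtain ⟨y, hy, rfl⟩ := List.mem_map.1 hx
            exact hN y (hmemK y hy)
        _ = (pieces.length + 1) * N := by
            rw [List.length_map, List.length_append, List.length_singleton, hltr,
              List.length_pmap, smul_eq_mul]
    have hreal : (wordLength S h : ℝ) ≤ (N * C₁) * ‖lam‖ + N * (C₁ + 1) := by
      have h1 : ((pieces.length + 1 : ℕ) : ℝ) ≤ C₁ * ‖lam‖ + C₁ + 1 := by
        push_cast
        linarith [hplen]
      have h2 : (wordLength S h : ℝ) ≤ ((pieces.length + 1 : ℕ) : ℝ) * N := by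
        exact_mod_cast Nat.cast_le.2 hwll |>.trans (le_of_eq (by push_cast; ring))
      have hN0 : (0:ℝ) ≤ N := Nat.cast_nonneg N
      calc (wordLength S h : ℝ) ≤ ((pieces.length + 1 : ℕ) : ℝ) * N := h2
        _ ≤ (C₁ * ‖lam‖ + C₁ + 1) * N := mul_le_mul_of_nonneg_right h1 hN0
        _ = (N * C₁) * ‖lam‖ + N * (C₁ + 1) := by ring
    -- convert to the stated form
    have ha0 : (0:ℝ) ≤ N * C₁ := by positivity
    have hA : (0:ℝ) < N * C₁ + 1 := by linarith
    rw [sub_le_iff_le_add]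
    rw [inv_mul_le_iff₀ hA]
    calc (wordLength S h : ℝ) ≤ (N * C₁) * ‖lam‖ + N * (C₁ + 1) := hreal
      _ ≤ (N * C₁ + 1) * (‖lam‖ + N * (C₁ + 1)) := by
          have hl0 : (0:ℝ) ≤ ‖lam‖ := norm_nonneg _
          have hb0 : (0:ℝ) ≤ N * (C₁ + 1) := by positivity
          nlinarith
  · -- upper bound
    have := hup h
    rw [htph] at this
    have hwl0 : (0:ℝ) ≤ (wordLength S h : ℝ) := Nat.cast_nonneg _
    calc ‖lam‖ ≤ M * (wordLength S h : ℝ) := this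
      _ ≤ (M + 1) * (wordLength S h : ℝ) + 1 := by nlinarith
end
end

section
/- Let H = T_H ⋊ H₀ be a locally compact split subgroup of Isom(𝔼ⁿ), let h = t^λ h₀ and h′ = t^{λ′} h₀′ be conjugate elements of H, and let u ∈ H₀ be the spherical part of some element of C_H(h,h′). Let η₀ be the minimum-norm real solution of the equation (Id − h₀′)η = λ′ − uλ in span_ℝ(L_H). Then there is a constant k₀ ≥ 0, depending only on H (and not on h, h′, u), such that some η_u ∈ L_H with λ′ − uλ = (Id − h₀′)η_u satisfies ‖η_u‖ ≤ ‖η₀‖ + k₀. -/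
noncomputable section

namespace LatAux

open Submodule Filter SemidirectProduct

variable {n : ℕ}

/-- `latticeLH` as an `AddSubgroup`. -/
def LH (H : Subgroup (IsomE n)) : AddSubgroup (En n) where
  carrier := latticeLH H
  zero_mem' := by
    show inl (Multiplicative.ofAdd (0 : En n)) ∈ H
    rw [show Multiplicative.ofAdd (0 : En n) = 1 from rfl, map_one]
    exact H.one_mem
  add_mem' := by
    intro a b ha hb
    show inl (Multiplicative.ofAdd (a + b)) ∈ H
    rw [show Multiplicative.ofAdd (a + b)
      = Multiplicative.ofAdd a * Multiplicative.ofAdd b from rfl, map_mul]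
    exact H.mul_mem ha hb
  neg_mem' := by
    intro a ha
    show inl (Multiplicative.ofAdd (-a)) ∈ H
    rw [show Multiplicative.ofAdd (-a) = (Multiplicative.ofAdd a)⁻¹ from rfl, map_inv]
    exact H.inv_mem ha

variable {n : ℕ}

lemma continuous_tPart : Continuous (tPart : IsomE n → En n) := by
  have h1 : Continuous (fun g : IsomE n => (g.left, g.right)) := continuous_induced_dom
  exact continuous_toAdd.comp (h1.fst)

lemma continuous_inlOfAdd :
    Continuous (fun v : En n => (inl (Multiplicative.ofAdd v) : IsomE n)) := by
  rw [continuous_induced_rng]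
  exact (continuous_ofAdd.prodMk continuous_const)

theorem isClosed_latticeLH (H : Subgroup (IsomE n)) (hsplit : Splits H)
    (hlc : LocallyCompactSpace ↥H) : IsClosed (latticeLH H) := by
  classical
  set f : En n → IsomE n := fun v => inl (Multiplicative.ofAdd v) with hf
  set L : Set (En n) := latticeLH H with hLdef
  -- compact neighborhood of 1 in H
  obtain ⟨K, hKcomp, hKmem⟩ := exists_compact_mem_nhds (⟨1, H.one_mem⟩ : ↥H)
  rw [nhds_induced] at hKmem
  obtain ⟨V, hV, hVK⟩ := Filter.mem_comap.mp hKmem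
  obtain ⟨U, hUV, hUopen, hU1⟩ := mem_nhds_iff.mp hV
  set D : Set (En n) := tPart '' (Subtype.val '' K) with hD
  have hDcomp : IsCompact D := (hKcomp.image continuous_subtype_val).image continuous_tPart
  have hDL : D ⊆ L := by
    rintro - ⟨x, ⟨y, hyK, rfl⟩, rfl⟩
    exact (hsplit y.1 y.2).1
  set U₀ : Set (En n) := f ⁻¹' U with hU₀
  have hU₀open : IsOpen U₀ := hUopen.preimage continuous_inlOfAdd
  have h0U₀ : (0 : En n) ∈ U₀ := by
    show f 0 ∈ U
    have : f 0 = 1 := map_one (inl : Multiplicative (En n) →* IsomE n)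
    rw [this]; exact hU1
  have hLU₀D : L ∩ U₀ ⊆ D := by
    rintro v ⟨hvL, hvU₀⟩
    have hvH : f v ∈ H := hvL
    have : (⟨f v, hvH⟩ : ↥H) ∈ K := hVK (hUV hvU₀)
    exact ⟨f v, ⟨⟨f v, hvH⟩, this, rfl⟩, rfl⟩
  -- now prove closedness
  refine isClosed_of_closure_subset ?_
  intro x hx
  obtain ⟨ε, hε, hball⟩ := Metric.isOpen_iff.mp hU₀open 0 h0U₀
  obtain ⟨l, hlL, hld⟩ := Metric.mem_closure_iff.mp hx (ε / 2) (half_pos hε)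
  have hLsub : ∀ a b : En n, a ∈ L → b ∈ L → a - b ∈ L := by
    intro a b ha hb
    show inl (Multiplicative.ofAdd (a - b)) ∈ H
    have : (Multiplicative.ofAdd (a - b))
        = Multiplicative.ofAdd a * (Multiplicative.ofAdd b)⁻¹ := rfl
    rw [this, map_mul, map_inv]
    exact H.mul_mem ha (H.inv_mem hb)
  have hyc : x - l ∈ closure L := by
    rw [Metric.mem_closure_iff]
    intro δ hδ
    obtain ⟨b, hbL, hbd⟩ := Metric.mem_closure_iff.mp hx δ hδ
    exact ⟨b - l, hLsub b l hbL hlL, by rwa [dist_sub_right]⟩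
  have hyU₀ : x - l ∈ U₀ := by
    apply hball
    rw [Metric.mem_ball, dist_zero_right]
    calc ‖x - l‖ = dist x l := by rw [dist_eq_norm]
    _ < ε / 2 := hld
    _ < ε := half_lt_self hε
  have hyD : x - l ∈ D := by
    have h1 : x - l ∈ closure (L ∩ U₀) := by
      rw [mem_closure_iff_nhds]
      intro t ht
      obtain ⟨b, hb⟩ := (mem_closure_iff_nhds.mp hyc) (t ∩ U₀)
        (Filter.inter_mem ht (hU₀open.mem_nhds hyU₀))
      exact ⟨b, hb.1.1, hb.2, hb.1.2⟩
    have := closure_mono hLU₀D h1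
    rwa [hDcomp.isClosed.closure_eq] at this
  have : (x - l) + l ∈ L := by
    have h1 : x - l ∈ L := hDL hyD
    have : (x - l) + l = (x - l) - (0 - l) := by abel
    rw [this]
    have h0 : (0 : En n) ∈ L := by
      show inl (Multiplicative.ofAdd (0 : En n)) ∈ H
      rw [show Multiplicative.ofAdd (0 : En n) = 1 from rfl, map_one]
      exact H.one_mem
    exact hLsub _ _ h1 (hLsub 0 l h0 hlL)
  simpa using this


variable {n : ℕ}

def lineSub (L : AddSubgroup (En n)) : Submodule ℝ (En n) where
  carrier := {v | ∀ t : ℝ, t • v ∈ L}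
  zero_mem' := fun t => by simpa using L.zero_mem
  add_mem' := fun ha hb t => by rw [smul_add]; exact L.add_mem (ha t) (hb t)
  smul_mem' := fun c v hv t => by rw [smul_smul]; exact hv (t * c)

def latPart (L : AddSubgroup (En n)) : AddSubgroup (En n) :=
  L ⊓ (lineSub L)ᗮ.toAddSubgroup

theorem sep_latPart (L : AddSubgroup (En n)) (hcl : IsClosed (L : Set (En n))) :
    ∃ ε > 0, ∀ v ∈ latPart L, ‖v‖ < ε → v = 0 := by
  by_contra hcon
  push_neg at hcon
  have hseq : ∀ k : ℕ, ∃ w : En n, w ∈ latPart L ∧ ‖w‖ < 1 / (k + 1) ∧ w ≠ 0 := by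
    intro k
    obtain ⟨w, hw, h1, h2⟩ := hcon (1 / (k + 1)) (by positivity)
    exact ⟨w, hw, h1, h2⟩
  choose v hvΛ hvn hv0 using hseq
  have hnorm : ∀ k, ‖v k‖ ≠ 0 := fun k => norm_ne_zero_iff.mpr (hv0 k)
  set u : ℕ → En n := fun k => ‖v k‖⁻¹ • v k with hu
  have husph : ∀ k, u k ∈ Metric.sphere (0 : En n) 1 := by
    intro k
    rw [Metric.mem_sphere, dist_zero_right, hu]
    rw [norm_smul, norm_inv, norm_norm, inv_mul_cancel₀ (hnorm k)]
  obtain ⟨z, hzs, φ, hφ, hconv⟩ := (isCompact_sphere (0 : En n) 1).tendsto_subseq husph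
  have hz1 : ‖z‖ = 1 := by
    rw [Metric.mem_sphere, dist_zero_right] at hzs; exact hzs
  set s : ℕ → ℝ := fun k => ‖v (φ k)‖ with hs
  have hspos : ∀ k, 0 < s k := fun k => lt_of_le_of_ne (norm_nonneg _) (Ne.symm (hnorm (φ k)))
  have hs0 : Tendsto s atTop (nhds 0) := by
    apply squeeze_zero (fun k => (norm_nonneg _)) (fun k => ?_)
      tendsto_one_div_add_atTop_nhds_zero_nat
    calc s k ≤ 1 / (φ k + 1) := le_of_lt (hvn (φ k))
    _ ≤ 1 / (k + 1) := by
        apply one_div_le_one_div_of_le (by positivity)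
        have h : (k : ℝ) ≤ (φ k : ℝ) := (Nat.cast_le (α := ℝ)).mpr hφ.le_apply
        linarith
  -- z is orthogonal to lineSub L
  have hzperp : z ∈ (lineSub L)ᗮ := by
    have hC : IsClosed ((lineSub L)ᗮ : Set (En n)) := Submodule.closed_of_finiteDimensional _
    refine hC.mem_of_tendsto hconv (Eventually.of_forall fun k => ?_)
    exact Submodule.smul_mem _ _ ((hvΛ (φ k)).2)
  -- z spans a line inside L
  have hzline : z ∈ lineSub L := by
    intro t
    set a : ℕ → ℝ := fun k => ((⌊t / s k⌋ : ℤ) : ℝ) * s k with ha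
    have hat : Tendsto a atTop (nhds t) := by
      have key : Tendsto (fun k => a k - t) atTop (nhds 0) := by
        apply squeeze_zero_norm (a := s) (fun k => ?_) hs0
        have hsne : s k ≠ 0 := ne_of_gt (hspos k)
        have : a k - t = (((⌊t / s k⌋ : ℤ) : ℝ) - t / s k) * s k := by
          field_simp
          simp only [ha]; ring
        rw [this, norm_mul]
        have h1 : |((⌊t / s k⌋ : ℤ) : ℝ) - t / s k| ≤ 1 := by
          rw [abs_le]
          constructor
          · linarith [Int.lt_floor_add_one (t / s k)]
          · linarith [Int.floor_le (t / s k)]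
        have h2 : ‖s k‖ = s k := Real.norm_of_nonneg (le_of_lt (hspos k))
        calc ‖((⌊t / s k⌋ : ℤ) : ℝ) - t / s k‖ * ‖s k‖ ≤ 1 * ‖s k‖ :=
          mul_le_mul_of_nonneg_right h1 (norm_nonneg _)
        _ = s k := by rw [one_mul, h2]
      have := key.add (tendsto_const_nhds (x := t))
      simpa using this
    have hw : Tendsto (fun k => a k • u (φ k)) atTop (nhds (t • z)) := hat.smul hconv
    have hwL : ∀ k, a k • u (φ k) ∈ L := by
      intro k
      have hsne : s k ≠ 0 := ne_of_gt (hspos k)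
      have : a k • u (φ k) = ⌊t / s k⌋ • v (φ k) := by
        rw [hu, ha, ← Int.cast_smul_eq_zsmul ℝ]
        rw [smul_smul, mul_assoc, mul_inv_cancel₀ hsne, mul_one]
      rw [this]
      exact AddSubgroup.zsmul_mem L ((hvΛ (φ k)).1) _
    exact hcl.mem_of_tendsto hw (Eventually.of_forall hwL)
  have : z = 0 := by
    rw [← inner_self_eq_zero (𝕜 := ℝ)]
    exact (Submodule.mem_orthogonal _ z).mp hzperp z hzline
  rw [this, norm_zero] at hz1
  exact zero_ne_one hz1

theorem cocompact_span (Λ : AddSubgroup (En n))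
    (hsep : ∃ ε > 0, ∀ v ∈ Λ, ‖v‖ < ε → v = 0) :
    ∃ c ≥ 0, ∃ sgen : Finset (En n), ↑sgen ⊆ (Λ : Set (En n)) ∧
      span ℝ (sgen : Set (En n)) = span ℝ (Λ : Set (En n)) ∧
      ∀ v ∈ span ℝ (Λ : Set (En n)), ∃ p ∈ Λ, ‖v - p‖ ≤ c := by
  classical
  obtain ⟨ε, hε, hsep⟩ := hsep
  set M : Submodule ℝ (En n) := span ℝ (Λ : Set (En n)) with hM
  set L' : Submodule ℤ ↥M :=
    Submodule.comap ((M.subtype).restrictScalars ℤ) (AddSubgroup.toIntSubmodule Λ) with hL'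
  have memL' : ∀ x : ↥M, x ∈ L' ↔ (x : En n) ∈ Λ := fun x => Iff.rfl
  have hΛM : (Λ : Set (En n)) ⊆ M := subset_span
  -- discreteness
  haveI hdisc : DiscreteTopology ↥L' := by
    apply DiscreteTopology.of_forall_le_norm hε
    rintro ⟨x, hx⟩ hne
    by_contra hlt
    rw [not_le] at hlt
    have hxnorm : ‖(x : En n)‖ < ε := hlt
    have : (x : En n) = 0 := hsep _ ((memL' x).mp hx) hxnorm
    exact hne (Subtype.ext (Subtype.ext this))
  -- L' spans M
  haveI hzl : IsZLattice ℝ L' := by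
    constructor
    rw [eq_top_iff]
    have h1 : M ≤ Submodule.map M.subtype (span ℝ (L' : Set ↥M)) := by
      rw [Submodule.map_span]
      refine le_trans (le_of_eq hM) (span_le.mpr ?_)
      intro a ha
      exact subset_span ⟨⟨a, hΛM ha⟩, (memL' _).mpr ha, rfl⟩
    rintro x -
    obtain ⟨y, hy, hyx⟩ := h1 x.2
    have : y = x := Subtype.ext hyx
    rwa [this] at hy
  clear_value L'
  set b := Module.Free.chooseBasis ℤ ↥L' with hb
  set bR := Module.Basis.ofZLatticeBasis ℝ L' b with hbR
  have hsp : span ℤ (Set.range ⇑bR) = L' := Module.Basis.ofZLatticeBasis_span ℝ L' b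
  refine ⟨∑ i, ‖bR i‖, Finset.sum_nonneg fun i _ => norm_nonneg _,
    Finset.univ.image (fun i => ((bR i : ↥M) : En n)), ?_, ?_, ?_⟩
  · intro a ha
    rw [Finset.coe_image, Finset.coe_univ, Set.image_univ] at ha
    obtain ⟨i, rfl⟩ := ha
    exact (memL' _).mp ((le_of_eq hsp) (subset_span ⟨i, rfl⟩))
  · rw [Finset.coe_image, Finset.coe_univ, Set.image_univ]
    have himg : (Set.range fun i => ((bR i : ↥M) : En n)) = M.subtype '' (Set.range bR) := by
      ext y
      constructor
      · rintro ⟨i, rfl⟩; exact ⟨bR i, ⟨i, rfl⟩, rfl⟩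
      · rintro ⟨w, ⟨i, rfl⟩, rfl⟩; exact ⟨i, rfl⟩
    rw [himg, ← Submodule.map_span, Module.Basis.span_eq, Submodule.map_top, Submodule.range_subtype]
  · intro v hv
    set x : ↥M := ⟨v, hv⟩ with hx
    set q0 := ZSpan.floor bR x with hq0
    have hq0mem : (q0 : ↥M) ∈ L' := (le_of_eq hsp) q0.2
    refine ⟨((q0 : ↥M) : En n), (memL' _).mp hq0mem, ?_⟩
    have h1 : v - ((q0 : ↥M) : En n) = ((x - (q0 : ↥M) : ↥M) : En n) := rfl
    have h2 : (x - (q0 : ↥M)) = ZSpan.fract bR x := (ZSpan.fract_apply bR x).symm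
    rw [h1, h2]
    have h3 : ‖((ZSpan.fract bR x : ↥M) : En n)‖ = ‖ZSpan.fract bR x‖ := rfl
    rw [h3]
    exact ZSpan.norm_fract_le bR x


variable {L : AddSubgroup (En n)}

lemma hg_symm {g : OrthGrp n} (hg : ∀ p, p ∈ L ↔ g p ∈ L) :
    ∀ p, p ∈ L ↔ g.symm p ∈ L := by
  intro p
  conv_lhs => rw [← g.apply_symm_apply p]
  exact (hg (g.symm p)).symm

lemma lineSub_pres {g : OrthGrp n} (hg : ∀ p, p ∈ L ↔ g p ∈ L) :
    ∀ v ∈ lineSub L, g v ∈ lineSub L := by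
  intro v hv t
  rw [← map_smul]
  exact (hg _).mp (hv t)

lemma orth_pres {g : OrthGrp n} (hg : ∀ p, p ∈ L ↔ g p ∈ L) :
    ∀ v ∈ (lineSub L)ᗮ, g v ∈ (lineSub L)ᗮ := by
  intro v hv
  rw [Submodule.mem_orthogonal]
  intro w hw
  have h1 : g.symm w ∈ lineSub L := lineSub_pres (hg_symm hg) _ hw
  have h2 : (inner ℝ w (g v) : ℝ) = inner ℝ (g.symm w) v := by
    conv_lhs => rw [← g.apply_symm_apply w]
    exact g.inner_map_map _ _
  rw [h2]
  exact (Submodule.mem_orthogonal _ _).mp hv _ h1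

lemma latPart_pres {g : OrthGrp n} (hg : ∀ p, p ∈ L ↔ g p ∈ L) :
    ∀ v ∈ latPart L, g v ∈ latPart L := fun v hv =>
  ⟨(hg v).mp hv.1, orth_pres hg v hv.2⟩

lemma latPart_pres_pow {g : OrthGrp n} (hg : ∀ p, p ∈ L ↔ g p ∈ L) :
    ∀ (j : ℕ), ∀ v ∈ latPart L, (g ^ j) v ∈ latPart L := by
  intro j v hv
  induction j with
  | zero => rw [pow_zero]; exact hv
  | succ j ih =>
    have h : (g ^ (j + 1)) v = g ((g ^ j) v) := by rw [pow_succ']; rfl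
    rw [h]
    exact latPart_pres hg _ ih

def fixedSub (g : OrthGrp n) : Submodule ℝ (En n) where
  carrier := {x | g x = x}
  zero_mem' := map_zero g
  add_mem' := fun {a b} ha hb => by
    show g (a + b) = a + b
    rw [map_add]
    rw [show g a = a from ha, show g b = b from hb]
  smul_mem' := fun c x hx => by
    show g (c • x) = c • x
    rw [map_smul]
    rw [show g x = x from hx]

theorem single_g (L : AddSubgroup (En n))
    (hsep : ∃ ε > 0, ∀ v ∈ latPart L, ‖v‖ < ε → v = 0)
    (sgen : Finset (En n)) (hsgenΛ : ↑sgen ⊆ (latPart L : Set (En n)))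
    (hsgenspan : span ℝ (sgen : Set (En n)) = span ℝ (latPart L : Set (En n)))
    (hΛclosed : IsClosed (latPart L : Set (En n)))
    (g : OrthGrp n) (hg : ∀ p, p ∈ L ↔ g p ∈ L) :
    ∃ c ≥ 0, ∀ v ∈ span ℝ ((latPart L : Set (En n))), g v = v →
      ∃ q ∈ latPart L, g q = q ∧ ‖v - q‖ ≤ c := by
  classical
  obtain ⟨ε, hε, hsepΛ⟩ := hsep
  set r := ∑ x ∈ sgen, ‖x‖ with hr
  have hrb : ∀ x ∈ sgen, ‖x‖ ≤ r := fun x hx =>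
    Finset.single_le_sum (fun y _ => norm_nonneg y) hx
  set S : Set (En n) := (latPart L : Set (En n)) ∩ Metric.closedBall 0 r with hS
  have hScomp : IsCompact S := (isCompact_closedBall (0 : En n) r).inter_left hΛclosed
  haveI hSdisc : DiscreteTopology ↥S := by
    apply DiscreteTopology.of_forall_le_dist hε
    rintro ⟨x, hx⟩ ⟨y, hy⟩ hne
    by_contra hlt
    rw [not_le] at hlt
    rw [Subtype.dist_eq, dist_eq_norm] at hlt
    have hxy : x - y = 0 := hsepΛ _ ((latPart L).sub_mem hx.1 hy.1) hlt
    exact hne (Subtype.ext (sub_eq_zero.mp hxy))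
  have hSfin : S.Finite := hScomp.finite (isDiscrete_iff_discreteTopology.mpr hSdisc)
  have hordaux : ∀ m₁ m₂ : ℕ, m₁ < m₂ →
      (∀ x ∈ sgen, (g ^ m₁) x = (g ^ m₂) x) →
      ∃ m : ℕ, 1 ≤ m ∧ ∀ x ∈ sgen, (g ^ m) x = x := by
    intro m₁ m₂ hlt heq
    refine ⟨m₂ - m₁, by omega, fun x hx => ?_⟩
    have h1 : (g ^ m₂) x = (g ^ m₁) ((g ^ (m₂ - m₁)) x) := by
      have h2 : g ^ m₂ = g ^ m₁ * g ^ (m₂ - m₁) := by rw [← pow_add]; congr 1; omega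
      rw [h2]; rfl
    have h3 : (g ^ m₁) ((g ^ (m₂ - m₁)) x) = (g ^ m₁) x := by
      rw [← h1, ← heq x hx]
    exact (g ^ m₁).injective h3
  have hΦfin : (Set.univ.pi (fun _ : ↥sgen => S)).Finite :=
    Set.Finite.pi (fun _ => hSfin)
  haveI := hΦfin.to_subtype
  have hmem : ∀ m : ℕ, (fun i : ↥sgen => (g ^ m) i.1) ∈ Set.univ.pi (fun _ : ↥sgen => S) := by
    intro m
    rw [Set.mem_univ_pi]
    intro i
    refine ⟨latPart_pres_pow hg m i.1 (hsgenΛ i.2), ?_⟩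
    rw [Metric.mem_closedBall, dist_zero_right, (g ^ m).norm_map]
    exact hrb i.1 i.2
  obtain ⟨m₁, m₂, hne, heq⟩ := Finite.exists_ne_map_eq_of_infinite
    (fun m : ℕ => (⟨fun i : ↥sgen => (g ^ m) i.1, hmem m⟩ :
      ↥(Set.univ.pi (fun _ : ↥sgen => S))))
  have heq' : ∀ x ∈ sgen, (g ^ m₁) x = (g ^ m₂) x := by
    intro x hx
    exact congrFun (congrArg Subtype.val heq) ⟨x, hx⟩
  obtain ⟨m, hm1, hmfix⟩ : ∃ m : ℕ, 1 ≤ m ∧ ∀ x ∈ sgen, (g ^ m) x = x := by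
    rcases lt_or_gt_of_ne hne with h | h
    · exact hordaux m₁ m₂ h heq'
    · exact hordaux m₂ m₁ h (fun x hx => (heq' x hx).symm)
  have hmne : (m : ℝ) ≠ 0 := Nat.cast_ne_zero.mpr (by omega)
  have hfixE : ∀ v ∈ span ℝ (latPart L : Set (En n)), (g ^ m) v = v := by
    rw [← hsgenspan]
    intro v hv
    have := LinearMap.eqOn_span (f := (g ^ m).toLinearEquiv.toLinearMap)
      (g := (LinearMap.id : En n →ₗ[ℝ] En n)) (s := (sgen : Set (En n)))
      (fun x hx => hmfix x hx) hv
    simpa using this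
  set A : En n →ₗ[ℝ] En n :=
    (m : ℝ)⁻¹ • (∑ j ∈ Finset.range m, ((g ^ j).toLinearEquiv.toLinearMap)) with hA
  have hApply : ∀ p, A p = (m : ℝ)⁻¹ • ∑ j ∈ Finset.range m, (g ^ j) p := by
    intro p
    rw [hA]
    simp [LinearMap.sum_apply]
  have hAfix : ∀ v, g v = v → A v = v := by
    intro v hv
    have hj : ∀ j : ℕ, (g ^ j) v = v := by
      intro j
      induction j with
      | zero => rw [pow_zero]; rfl
      | succ j ih =>
        have h : (g ^ (j + 1)) v = g ((g ^ j) v) := by rw [pow_succ']; rfl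
        rw [h, ih, hv]
    have hsum : ∑ j ∈ Finset.range m, (g ^ j) v = (m : ℝ) • v := by
      rw [Finset.sum_congr rfl (fun j _ => hj j), Finset.sum_const, Finset.card_range,
        Nat.cast_smul_eq_nsmul ℝ]
    rw [hApply, hsum, inv_smul_smul₀ hmne]
  have hmA : ∀ p ∈ latPart L,
      (m : ℝ) • A p ∈ latPart L ∧ g ((m : ℝ) • A p) = (m : ℝ) • A p := by
    intro p hp
    have hsum : (m : ℝ) • A p = ∑ j ∈ Finset.range m, (g ^ j) p := by
      rw [hApply, smul_inv_smul₀ hmne]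
    have hgm : (g ^ m) p = p := hfixE p (subset_span hp)
    constructor
    · rw [hsum]
      exact AddSubgroup.sum_mem _ (fun j _ => latPart_pres_pow hg j p hp)
    · rw [hsum, map_sum]
      have h1 : ∀ j : ℕ, g ((g ^ j) p) = (g ^ (j + 1)) p := fun j => by
        rw [pow_succ']; rfl
      rw [Finset.sum_congr rfl (fun j _ => h1 j)]
      have e1 := Finset.sum_range_succ' (fun j => (g ^ j) p) m
      have e2 := Finset.sum_range_succ (fun j => (g ^ j) p) m
      have e3 : (∑ j ∈ Finset.range m, (g ^ (j + 1)) p) + p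
          = (∑ j ∈ Finset.range m, (g ^ j) p) + p := by
        have e4 := e1.symm.trans e2
        simpa [hgm, pow_zero] using e4
      exact add_right_cancel e3
  obtain ⟨c, hc0, sg', hsg1, hsg2, hcover⟩ :=
    cocompact_span (latPart L ⊓ (fixedSub g).toAddSubgroup)
      ⟨ε, hε, fun v hv hn => hsepΛ v (AddSubgroup.mem_inf.mp hv).1 hn⟩
  refine ⟨c, hc0, fun v hv hgv => ?_⟩
  have hvW : v ∈ span ℝ
      ((latPart L ⊓ (fixedSub g).toAddSubgroup : AddSubgroup (En n)) : Set (En n)) := by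
    have hAv : A v = v := hAfix v hgv
    have h1 : A v ∈ Submodule.map A (span ℝ (latPart L : Set (En n))) := ⟨v, hv, rfl⟩
    rw [Submodule.map_span] at h1
    have h2 : A '' (latPart L : Set (En n)) ⊆
        ↑(span ℝ ((latPart L ⊓ (fixedSub g).toAddSubgroup : AddSubgroup (En n)) : Set (En n))) := by
      rintro - ⟨p, hp, rfl⟩
      have hmem2 : (m : ℝ) • A p ∈ latPart L ⊓ (fixedSub g).toAddSubgroup := by
        rw [AddSubgroup.mem_inf]
        exact (hmA p hp)
      have h5 : A p = (m : ℝ)⁻¹ • ((m : ℝ) • A p) := (inv_smul_smul₀ hmne _).symm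
      rw [h5]
      exact Submodule.smul_mem _ _ (subset_span hmem2)
    have h3 := span_le.mpr h2
    rw [← hAv]
    exact h3 h1
  obtain ⟨p, hp, hnorm⟩ := hcover v hvW
  rw [AddSubgroup.mem_inf] at hp
  exact ⟨p, hp.1, hp.2, hnorm⟩

lemma lineSub_le (L : AddSubgroup (En n)) : (lineSub L : Set (En n)) ⊆ L := fun v hv => by
  simpa using hv 1

theorem key_lemma (L : AddSubgroup (En n)) (hcl : IsClosed (L : Set (En n))) :
    ∃ k₀ : ℝ, 0 ≤ k₀ ∧ ∀ g : OrthGrp n, (∀ p : En n, p ∈ L ↔ g p ∈ L) →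
      ∀ v ∈ span ℝ (L : Set (En n)), g v = v →
        ∃ q ∈ L, g q = q ∧ ‖v - q‖ ≤ k₀ := by
  classical
  have hΛclosed : IsClosed (latPart L : Set (En n)) := by
    have h : (latPart L : Set (En n))
        = (L : Set (En n)) ∩ ((lineSub L)ᗮ : Set (En n)) := rfl
    rw [h]
    exact hcl.inter (Submodule.closed_of_finiteDimensional _)
  obtain ⟨εd, hεd, hsepΛ⟩ := sep_latPart L hcl
  obtain ⟨cΛ, hcΛ0, sgen, hsgenΛ, hsgenspan, _⟩ :=
    cocompact_span (latPart L) ⟨εd, hεd, hsepΛ⟩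
  set r := ∑ x ∈ sgen, ‖x‖ with hr
  have hrb : ∀ x ∈ sgen, ‖x‖ ≤ r := fun x hx =>
    Finset.single_le_sum (fun y _ => norm_nonneg y) hx
  set S : Set (En n) := (latPart L : Set (En n)) ∩ Metric.closedBall 0 r with hS
  have hScomp : IsCompact S := (isCompact_closedBall (0 : En n) r).inter_left hΛclosed
  haveI hSdisc : DiscreteTopology ↥S := by
    apply DiscreteTopology.of_forall_le_dist hεd
    rintro ⟨x, hx⟩ ⟨y, hy⟩ hne
    by_contra hlt
    rw [not_le] at hlt
    rw [Subtype.dist_eq, dist_eq_norm] at hlt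
    have hxy : x - y = 0 := hsepΛ _ ((latPart L).sub_mem hx.1 hy.1) hlt
    exact hne (Subtype.ext (sub_eq_zero.mp hxy))
  have hSfin : S.Finite := hScomp.finite (isDiscrete_iff_discreteTopology.mpr hSdisc)
  have hΦfin : (Set.univ.pi (fun _ : ↥sgen => S)).Finite :=
    Set.Finite.pi (fun _ => hSfin)
  set pred : (↥sgen → En n) → ℝ → Prop := fun f c => 0 ≤ c ∧
    ∀ g : OrthGrp n, (∀ p : En n, p ∈ L ↔ g p ∈ L) → (∀ i : ↥sgen, g i.1 = f i) →
      ∀ v ∈ span ℝ (latPart L : Set (En n)), g v = v →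
        ∃ q ∈ latPart L, g q = q ∧ ‖v - q‖ ≤ c with hpreddef
  set cfun : (↥sgen → En n) → ℝ := fun f => if h : ∃ c, pred f c then h.choose else 0
    with hcfun
  have hcfun0 : ∀ f, 0 ≤ cfun f := by
    intro f
    rw [hcfun]
    by_cases h : ∃ c, pred f c
    · simp only [dif_pos h]
      exact h.choose_spec.1
    · simp only [dif_neg h]
      exact le_refl 0
  set k₁ : ℝ := ∑ f ∈ hΦfin.toFinset, cfun f with hk₁
  have hk₁0 : 0 ≤ k₁ := Finset.sum_nonneg fun f _ => hcfun0 f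
  refine ⟨k₁, hk₁0, ?_⟩
  intro g hg v hv hgv
  set φg : ↥sgen → En n := fun i => g i.1 with hφg
  have hφgΦ : φg ∈ Set.univ.pi (fun _ : ↥sgen => S) := by
    rw [Set.mem_univ_pi]
    intro i
    refine ⟨latPart_pres hg i.1 (hsgenΛ i.2), ?_⟩
    rw [Metric.mem_closedBall, dist_zero_right, g.norm_map]
    exact hrb i.1 i.2
  have hexists : ∃ c, pred φg c := by
    obtain ⟨c, hc0, hc⟩ := single_g L ⟨εd, hεd, hsepΛ⟩ sgen hsgenΛ hsgenspan hΛclosed g hg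
    refine ⟨c, hc0, ?_⟩
    intro g' hg' hagree w hw hg'w
    have hEq : ∀ x ∈ span ℝ (sgen : Set (En n)), g' x = g x := by
      intro x hx
      exact LinearMap.eqOn_span (f := g'.toLinearEquiv.toLinearMap)
        (g := g.toLinearEquiv.toLinearMap) (s := (sgen : Set (En n)))
        (fun y hy => (hagree ⟨y, hy⟩)) hx
    have hwspan : w ∈ span ℝ (sgen : Set (En n)) := by rw [hsgenspan]; exact hw
    have hgw : g w = w := by rw [← hEq w hwspan]; exact hg'w
    obtain ⟨q, hqΛ, hqfix, hqnorm⟩ := hc w hw hgw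
    have hqspan : q ∈ span ℝ (sgen : Set (En n)) := by
      rw [hsgenspan]; exact subset_span hqΛ
    exact ⟨q, hqΛ, by rw [hEq q hqspan]; exact hqfix, hqnorm⟩
  have hpredc : pred φg (cfun φg) := by
    rw [hcfun]
    simp only [dif_pos hexists]
    exact hexists.choose_spec
  have hck₁ : cfun φg ≤ k₁ :=
    Finset.single_le_sum (fun f _ => hcfun0 f) (hΦfin.mem_toFinset.mpr hφgΦ)
  -- decompose v into its line part and lattice part
  set P := orthogonalProjection (lineSub L) with hPdef
  set v₀ : En n := (P v : En n) with hv₀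
  set v₁ : En n := v - v₀ with hv₁
  have hv₀mem : v₀ ∈ lineSub L := (P v).2
  have hv₁orth : v₁ ∈ (lineSub L)ᗮ := Submodule.sub_starProjection_mem_orthogonal v
  have hsumv : v₀ + v₁ = v := by rw [hv₁]; abel
  have hxeq : v₀ - g v₀ = g v₁ - v₁ := by
    have h1 : g v₀ + g v₁ = v₀ + v₁ := by rw [← map_add, hsumv]; exact hgv
    have h2 : v₀ - g v₀ = (v₀ + v₁) - (g v₀ + v₁) := by abel
    rw [h2, ← h1]
    abel
  have hx0 : v₀ - g v₀ = 0 := by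
    have hxline : v₀ - g v₀ ∈ lineSub L :=
      Submodule.sub_mem _ hv₀mem (lineSub_pres hg _ hv₀mem)
    have hxorth : v₀ - g v₀ ∈ (lineSub L)ᗮ := by
      rw [hxeq]
      exact Submodule.sub_mem _ (orth_pres hg _ hv₁orth) hv₁orth
    have hzero := (Submodule.mem_orthogonal _ _).mp hxorth _ hxline
    exact inner_self_eq_zero.mp hzero
  have hgv₀ : g v₀ = v₀ := (sub_eq_zero.mp hx0).symm
  have hgv₁ : g v₁ = v₁ := sub_eq_zero.mp (by rw [← hxeq]; exact hx0)
  have hΛorth : span ℝ (latPart L : Set (En n)) ≤ (lineSub L)ᗮ :=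
    span_le.mpr (fun y hy => hy.2)
  have hsup : span ℝ (L : Set (En n)) ≤ lineSub L ⊔ span ℝ (latPart L : Set (En n)) := by
    rw [span_le]
    intro x hx
    have hPx : (P x : En n) ∈ lineSub L := (P x).2
    have hxmem : x - (P x : En n) ∈ latPart L :=
      ⟨L.sub_mem hx (lineSub_le L hPx), Submodule.sub_starProjection_mem_orthogonal x⟩
    have hxe : x = (P x : En n) + (x - (P x : En n)) := by abel
    rw [hxe]
    exact Submodule.add_mem _ (Submodule.mem_sup_left hPx)
      (Submodule.mem_sup_right (subset_span hxmem))
  obtain ⟨a, ha, b, hb, hab⟩ := Submodule.mem_sup.mp (hsup hv)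
  have hPv : (P v : En n) = a := by
    have hPa : ((P a : En n)) = a := Submodule.starProjection_eq_self_iff.mpr ha
    have hPb : P b = 0 :=
      Submodule.orthogonalProjectionOnto_apply_of_mem_orthogonal (hΛorth hb)
    have h3 : P v = P a + P b := by rw [← map_add, hab]
    rw [h3]
    push_cast
    rw [hPa, hPb]
    simp
  have hv₁b : v₁ = b := by
    rw [hv₁, hv₀, hPv, ← hab]
    abel
  have hv₁span : v₁ ∈ span ℝ (latPart L : Set (En n)) := by rw [hv₁b]; exact hb
  obtain ⟨q₁, hq₁Λ, hq₁fix, hq₁norm⟩ := hpredc.2 g hg (fun i => rfl) v₁ hv₁span hgv₁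
  refine ⟨v₀ + q₁, L.add_mem (lineSub_le L hv₀mem) hq₁Λ.1, ?_, ?_⟩
  · rw [map_add, hgv₀, hq₁fix]
  · have he : v - (v₀ + q₁) = v₁ - q₁ := by rw [hv₁]; abel
    rw [he]
    exact le_trans hq₁norm hck₁


end LatAux

open LatAux SemidirectProduct in
/-- **Lattice points near the minimum-norm solution.**  Let `H = T_H ⋊ H₀` be a locally
compact split subgroup of `Isom(𝔼ⁿ)`.  There is a constant `k₀ ≥ 0`, depending only on
`H`, such that: whenever `h = t^λ h₀` and `h' = t^{λ'} h₀'` are conjugate in `H`,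
`u ∈ H₀` is the spherical part of some element of the coconjugation set `C_H(h,h')`, and
`η₀ ∈ span_ℝ(L_H)` is the minimum-norm real solution of `(Id − h₀')η = λ' − uλ`, then
some `η_u ∈ L_H` with `λ' − uλ = (Id − h₀')η_u` satisfies `‖η_u‖ ≤ ‖η₀‖ + k₀`. -/
theorem lattice_solution_near_minimal_solution (n : ℕ) (H : Subgroup (IsomE n))
    (hsplit : Splits H) (hlc : LocallyCompactSpace ↥H) :
    ∃ k₀ : ℝ, 0 ≤ k₀ ∧
      ∀ h h' : IsomE n, h ∈ H → h' ∈ H →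
      ∀ u : OrthGrp n, (∃ k ∈ H, k * h * k⁻¹ = h' ∧ k.right = u) →
      ∀ η₀ : En n, (η₀ : En n) ∈ Submodule.span ℝ (latticeLH H) →
        η₀ - h'.right η₀ = tPart h' - u (tPart h) →
        (∀ x ∈ Submodule.span ℝ (latticeLH H),
          x - h'.right x = tPart h' - u (tPart h) → ‖η₀‖ ≤ ‖x‖) →
        ∃ ηu ∈ latticeLH H,
          tPart h' - u (tPart h) = ηu - h'.right ηu ∧ ‖ηu‖ ≤ ‖η₀‖ + k₀ := by
  classical
  set L := LatAux.LH H with hLdef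
  have hcl : IsClosed (L : Set (En n)) := isClosed_latticeLH H hsplit hlc
  obtain ⟨k₀, hk₀0, hkey⟩ := key_lemma L hcl
  refine ⟨k₀, hk₀0, ?_⟩
  rintro h h' hh hh' u ⟨k, hkH, hconj, hku⟩ η₀ hη₀span hη₀eq hmin
  set η : En n := tPart k with hηdef
  have hηL : η ∈ L := (hsplit k hkH).1
  -- h'.right preserves L
  have hdir : ∀ w : OrthGrp n, inr w ∈ H → ∀ p, p ∈ L → w p ∈ L := by
    intro w hw p hp
    show inl (Multiplicative.ofAdd (w p)) ∈ H
    rw [show (inl (Multiplicative.ofAdd (w p)) : IsomE n)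
        = inr w * inl (Multiplicative.ofAdd p) * inr w⁻¹ from
      inl_aut w (Multiplicative.ofAdd p)]
    have hinv : (inr w⁻¹ : IsomE n) ∈ H := by rw [map_inv]; exact H.inv_mem hw
    exact H.mul_mem (H.mul_mem hw hp) hinv
  have hw' : (inr h'.right : IsomE n) ∈ H := (hsplit h' hh').2
  have hg : ∀ p, p ∈ L ↔ h'.right p ∈ L := by
    intro p
    constructor
    · exact hdir h'.right hw' p
    · intro hp
      have h2 : (inr (h'.right)⁻¹ : IsomE n) ∈ H := by rw [map_inv]; exact H.inv_mem hw'
      have h4 := hdir _ h2 _ hp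
      have h3 : (h'.right)⁻¹ (h'.right p) = p := by
        show ((h'.right)⁻¹ * h'.right) p = p
        rw [inv_mul_cancel]
        rfl
      rwa [h3] at h4
  -- conjugation equation
  have hR : k.right * h.right * k.right⁻¹ = h'.right := by
    have := congrArg SemidirectProduct.right hconj
    simpa using this
  have hL' := congrArg SemidirectProduct.left hconj
  simp only [SemidirectProduct.mul_left, SemidirectProduct.inv_left,
    SemidirectProduct.mul_right] at hL'
  have hvec : η + k.right (tPart h) + (k.right * h.right) (k.right⁻¹ (-η)) = tPart h' :=
    congrArg Multiplicative.toAdd hL'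
  have h2 : (k.right * h.right) (k.right⁻¹ (-η)) = -(h'.right η) := by
    have e1 : (k.right * h.right) (k.right⁻¹ (-η))
        = (k.right * h.right * k.right⁻¹) (-η) := rfl
    rw [e1, hR, map_neg]
  rw [h2] at hvec
  have hη₁ : η - h'.right η = tPart h' - u (tPart h) := by
    rw [← hku, ← hvec]
    abel
  set wv : En n := η - η₀ with hwv
  have hgw : h'.right wv = wv := by
    have e1 : η - h'.right η = η₀ - h'.right η₀ := by rw [hη₁, hη₀eq]
    have e2 : h'.right wv = h'.right η - h'.right η₀ := map_sub _ _ _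
    rw [e2, hwv]
    have e3 : h'.right η - h'.right η₀ - (η - η₀) = (η₀ - h'.right η₀) - (η - h'.right η) := by
      abel
    rw [← sub_eq_zero, e3, ← e1, sub_self]
  have hwspan : wv ∈ Submodule.span ℝ (L : Set (En n)) :=
    Submodule.sub_mem _ (Submodule.subset_span hηL) hη₀span
  obtain ⟨q, hqL, hqfix, hqnorm⟩ := hkey h'.right hg wv hwspan hgw
  refine ⟨η - q, L.sub_mem hηL hqL, ?_, ?_⟩
  · rw [map_sub, hqfix, ← hη₁]
    abel
  · have e4 : η - q = η₀ + (wv - q) := by rw [hwv]; abel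
    rw [e4]
    exact le_trans (norm_add_le _ _) (by linarith [hqnorm])
end
end
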